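/- arXiv:1808.08570 — 3 statements merged into one kernel-verified Lean document; each statement's English description precedes it below -/
import Mathlib

section
/- The ℂ-vector space Ω¹_R, for R = ℂ[t,t⁻¹,u] with uᵐ = k(t) = Σᵢ₌₀ᵈ aᵢtⁱ monic of degree d, is spanned by the elements tⁱuᵏ·dt (i ∈ ℤ, 0 ≤ k ≤ m-1) together with tʲuˡ·du (0 ≤ j ≤ d-1, 0 ≤ l ≤ m-2), where the elements uˡ·du (j = 0) may be omitted when a₀ = 0. -/
noncomputable section

abbrev LA : Type := LaurentPolynomial ℂ

/-- The superelliptic ring `R = ℂ[t,t⁻¹,u]` with `u^m = k(t)`. -/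
abbrev SER (m : ℕ) (k : Polynomial ℂ) : Type :=
  AdjoinRoot ((Polynomial.X : Polynomial LA) ^ m - Polynomial.C k.toLaurent)

/-- `t^i ∈ R` for `i : ℤ`. -/
def tpow (m : ℕ) (k : Polynomial ℂ) (i : ℤ) : SER m k :=
  AdjoinRoot.of _ (LaurentPolynomial.T i)

/-- `u ∈ R`. -/
def uu (m : ℕ) (k : Polynomial ℂ) : SER m k := AdjoinRoot.root _

/-- The universal derivation `d : R → Ω¹_{R/ℂ}`. -/
def Dd (m : ℕ) (k : Polynomial ℂ) :
    Derivation ℂ (SER m k) (KaehlerDifferential ℂ (SER m k)) :=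
  KaehlerDifferential.D ℂ (SER m k)

/-- The subspace `dR ⊆ Ω¹_R` of exact differentials. -/
def dR (m : ℕ) (k : Polynomial ℂ) : Submodule ℂ (KaehlerDifferential ℂ (SER m k)) :=
  LinearMap.range (Dd m k).toLinearMap

/-- The quotient `Ω¹_R / dR`. -/
abbrev OmQ (m : ℕ) (k : Polynomial ℂ) := KaehlerDifferential ℂ (SER m k) ⧸ dR m k

/-- The class of a differential in `Ω¹_R / dR`. -/
def cl (m : ℕ) (k : Polynomial ℂ) (w : KaehlerDifferential ℂ (SER m k)) : OmQ m k :=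
  Submodule.Quotient.mk w

/-- The polynomial `k(t) = Σ_{i=0}^d a_i t^i`. -/
def kpoly (d : ℕ) (a : ℕ → ℂ) : Polynomial ℂ :=
  ∑ i ∈ Finset.range (d + 1), Polynomial.C (a i) * Polynomial.X ^ i

variable (m : ℕ) (k : Polynomial ℂ)

lemma tpow_add (i j : ℤ) : tpow m k i * tpow m k j = tpow m k (i + j) := by
  unfold tpow; rw [← map_mul, ← LaurentPolynomial.T_add]

lemma tpow_zero : tpow m k 0 = 1 := by
  unfold tpow; rw [LaurentPolynomial.T_zero, map_one]

lemma tpow_nat (n : ℕ) : tpow m k 1 ^ n = tpow m k n := by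
  unfold tpow; rw [← map_pow, LaurentPolynomial.T_pow, mul_one]

lemma smul_eq_C_mul (c : ℂ) (x : SER m k) :
    c • x = AdjoinRoot.of _ (LaurentPolynomial.C c) * x := by
  rw [Algebra.smul_def]
  congr 1

lemma uu_m : uu m k ^ m = AdjoinRoot.of _ k.toLaurent := by
  have h : (AdjoinRoot.mk ((Polynomial.X : Polynomial LA) ^ m - Polynomial.C k.toLaurent))
      ((Polynomial.X : Polynomial LA) ^ m - Polynomial.C k.toLaurent) = 0 := AdjoinRoot.mk_self
  rw [map_sub, map_pow, AdjoinRoot.mk_X, sub_eq_zero] at h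
  exact h


lemma smul_eq_C_mul' (f : Polynomial LA) (c : ℂ) (x : AdjoinRoot f) :
    c • x = AdjoinRoot.of f (LaurentPolynomial.C c) * x := by
  rw [Algebra.smul_def]
  congr 1

lemma of_k' (f : Polynomial LA) (d : ℕ) (a : ℕ → ℂ) :
    AdjoinRoot.of f (kpoly d a).toLaurent
      = ∑ i ∈ Finset.range (d+1), a i • (AdjoinRoot.of f (LaurentPolynomial.T 1) ^ i) := by
  have hLA : (kpoly d a).toLaurent
      = ∑ i ∈ Finset.range (d+1), LaurentPolynomial.C (a i) * LaurentPolynomial.T 1 ^ i := by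
    rw [show kpoly d a = ∑ i ∈ Finset.range (d + 1), Polynomial.C (a i) * Polynomial.X ^ i
      from rfl, map_sum]
    refine Finset.sum_congr rfl fun i _ => ?_
    rw [map_mul, Polynomial.toLaurent_C, map_pow, Polynomial.toLaurent_X]
  rw [hLA, map_sum]
  refine Finset.sum_congr rfl fun i _ => ?_
  rw [map_mul, map_pow, smul_eq_C_mul']

lemma of_k (d : ℕ) (a : ℕ → ℂ) :
    AdjoinRoot.of ((Polynomial.X : Polynomial LA) ^ m - Polynomial.C (kpoly d a).toLaurent)
        (kpoly d a).toLaurent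
      = ∑ i ∈ Finset.range (d+1), a i • (tpow m (kpoly d a) 1 ^ i) := of_k' _ d a

lemma uu_m_sum (d : ℕ) (a : ℕ → ℂ) :
    uu m (kpoly d a) ^ m = ∑ i ∈ Finset.range (d+1), a i • (tpow m (kpoly d a) 1 ^ i) := by
  rw [uu_m, of_k]

set_option maxHeartbeats 2000000 in
theorem key (m : ℕ) (hm : 2 ≤ m) (d : ℕ) (hd : 1 ≤ d) (a : ℕ → ℂ) (had : a d = 1)
    (j0 : ℕ) (hj01 : j0 ≤ 1) (haj0 : a j0 ≠ 0) (hlow : ∀ i, i < j0 → a i = 0) :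
    Submodule.span ℂ
      ({ω | ∃ (i : ℤ) (l : ℕ), l ≤ m - 1 ∧
          ω = (tpow m (kpoly d a) i * uu m (kpoly d a) ^ l) •
            Dd m (kpoly d a) (tpow m (kpoly d a) 1)} ∪
       {ω | ∃ (j l : ℕ), j0 ≤ j ∧ j ≤ d - 1 ∧ l ≤ m - 2 ∧
          ω = (tpow m (kpoly d a) (j : ℤ) * uu m (kpoly d a) ^ l) •
            Dd m (kpoly d a) (uu m (kpoly d a))}) = ⊤ := by
  set t : ℤ → SER m (kpoly d a) := tpow m (kpoly d a) with htdef
  set u : SER m (kpoly d a) := uu m (kpoly d a) with hudef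
  set D := Dd m (kpoly d a) with hDdef
  set S : Set (KaehlerDifferential ℂ (SER m (kpoly d a))) :=
      ({ω | ∃ (i : ℤ) (l : ℕ), l ≤ m - 1 ∧ ω = (t i * u ^ l) • D (t 1)} ∪
       {ω | ∃ (j l : ℕ), j0 ≤ j ∧ j ≤ d - 1 ∧ l ≤ m - 2 ∧
          ω = (t (j : ℤ) * u ^ l) • D u}) with hSdef
  set T := Submodule.span ℂ S with hTdef
  have hmC : (m : ℂ) ≠ 0 := Nat.cast_ne_zero.mpr (by omega)
  have htt : ∀ i j : ℤ, t i * t j = t (i + j) := fun i j => tpow_add m _ i j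
  have ht0 : t 0 = 1 := tpow_zero m _
  have htn : ∀ n : ℕ, t 1 ^ n = t n := fun n => tpow_nat m _ n
  have hum : u ^ m = ∑ i ∈ Finset.range (d + 1), a i • t 1 ^ i := uu_m_sum m d a
  have hgen1 : ∀ (i : ℤ) (l : ℕ), l ≤ m - 1 → (t i * u ^ l) • D (t 1) ∈ T :=
    fun i l hl => Submodule.subset_span (Or.inl ⟨i, l, hl, rfl⟩)
  have hgen2 : ∀ j l : ℕ, j0 ≤ j → j ≤ d - 1 → l ≤ m - 2 → (t (j : ℤ) * u ^ l) • D u ∈ T :=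
    fun j l h1 h2 h3 => Submodule.subset_span (Or.inr ⟨j, l, h1, h2, h3, rfl⟩)
  -- the key derivation identity
  have hE : u ^ (m - 1) • D u
      = ∑ i ∈ Finset.range (d + 1), ((i : ℂ) * a i / (m : ℂ)) • (t 1 ^ (i - 1) • D (t 1)) := by
    have h1 : D (u ^ m) = (m : ℂ) • (u ^ (m - 1) • D u) := by
      rw [Derivation.leibniz_pow, Nat.cast_smul_eq_nsmul]
    have h2 : D (u ^ m)
        = ∑ i ∈ Finset.range (d + 1), ((i : ℂ) * a i) • (t 1 ^ (i - 1) • D (t 1)) := by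
      rw [hum, map_sum]
      refine Finset.sum_congr rfl fun i _ => ?_
      rw [Derivation.map_smul, Derivation.leibniz_pow,
        ← Nat.cast_smul_eq_nsmul (R := ℂ), smul_smul, mul_comm (a i)]
    have h3 : ((m : ℂ)⁻¹ • (m : ℂ) • (u ^ (m - 1) • D u)) = u ^ (m - 1) • D u := by
      rw [smul_smul, inv_mul_cancel₀ hmC, one_smul]
    rw [← h3, ← h1, h2, Finset.smul_sum]
    refine Finset.sum_congr rfl fun i _ => ?_
    rw [smul_smul, div_eq_inv_mul]
  have hB : ∀ (i : ℤ) (l : ℕ), l ≤ m - 1 → (t i * u ^ l * u ^ (m - 1)) • D u ∈ T := by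
    intro i l hl
    rw [← smul_smul, hE, Finset.smul_sum]
    refine Submodule.sum_mem _ fun i' _ => ?_
    rw [smul_comm]
    refine Submodule.smul_mem _ _ ?_
    have he : (t i * u ^ l) • (t 1 ^ (i' - 1) • D (t 1))
        = (t (i + (i' - 1 : ℕ)) * u ^ l) • D (t 1) := by
      rw [smul_smul, htn, mul_right_comm, htt]
    rw [he]
    exact hgen1 _ _ hl
  have hRHS : ∀ (s : ℤ) (l : ℕ), l ≤ m - 2 → (t s * u ^ l * u ^ m) • D u ∈ T := by
    intro s l hl
    have h1 : t s * u ^ l * u ^ m = t s * u ^ (l + 1) * u ^ (m - 1) := by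
      rw [mul_assoc, mul_assoc, ← pow_add, ← pow_add]
      congr 2
      omega
    rw [h1]
    exact hB s (l + 1) (by omega)
  have hIdent : ∀ (s : ℤ) (l : ℕ),
      ∑ i ∈ Finset.range (d + 1), a i • ((t (s + i) * u ^ l) • D u)
        = (t s * u ^ l * u ^ m) • D u := by
    intro s l
    have hterm : ∀ i ∈ Finset.range (d + 1), a i • ((t (s + i) * u ^ l) • D u)
        = ((a i • t 1 ^ i) * (t s * u ^ l)) • D u := by
      intro i _
      have hx : t (s + (i : ℤ)) * u ^ l = t 1 ^ i * (t s * u ^ l) := by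
        rw [htn, ← mul_assoc, htt, add_comm (i : ℤ) s]
      rw [smul_mul_assoc, smul_assoc, hx]
    calc ∑ i ∈ Finset.range (d + 1), a i • ((t (s + i) * u ^ l) • D u)
        = ∑ i ∈ Finset.range (d + 1), ((a i • t 1 ^ i) * (t s * u ^ l)) • D u :=
          Finset.sum_congr rfl hterm
      _ = ((∑ i ∈ Finset.range (d + 1), a i • t 1 ^ i) * (t s * u ^ l)) • D u := by
          rw [← Finset.sum_smul, ← Finset.sum_mul]
      _ = (t s * u ^ l * u ^ m) • D u := by
          rw [← hum, mul_comm (u ^ m)]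
  have h4 : ∀ l : ℕ, l ≤ m - 2 → (t (d : ℤ) * u ^ l) • D u ∈ T := by
    intro l hl
    have hid := hIdent 0 l
    rw [Finset.sum_range_succ] at hid
    simp only [zero_add] at hid
    rw [had, one_smul] at hid
    rw [eq_sub_of_add_eq' hid]
    refine Submodule.sub_mem _ (hRHS 0 l hl) (Submodule.sum_mem _ fun i hi => ?_)
    rcases Nat.lt_or_ge i j0 with h | h
    · rw [hlow i h, zero_smul]; exact Submodule.zero_mem _
    · refine Submodule.smul_mem _ _ (hgen2 i l h ?_ hl)
      have := Finset.mem_range.mp hi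
      omega
  have h5 : ∀ l : ℕ, l ≤ m - 2 → (t ((j0 : ℤ) - 1) * u ^ l) • D u ∈ T := by
    intro l hl
    have hid := hIdent (-1) l
    have hj0mem : j0 ∈ Finset.range (d + 1) := Finset.mem_range.mpr (by omega)
    rw [← Finset.add_sum_erase _ _ hj0mem] at hid
    have hmem : a j0 • ((t (-1 + (j0 : ℤ)) * u ^ l) • D u) ∈ T := by
      rw [eq_sub_of_add_eq hid]
      refine Submodule.sub_mem _ (hRHS (-1) l hl) (Submodule.sum_mem _ fun i hi => ?_)
      obtain ⟨hne, hir⟩ := Finset.mem_erase.mp hi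
      have hid2 := Finset.mem_range.mp hir
      rcases Nat.lt_or_ge i j0 with h | h
      · rw [hlow i h, zero_smul]; exact Submodule.zero_mem _
      · have hc : (-1 + (i : ℤ)) = ((i - 1 : ℕ) : ℤ) := by omega
        rw [hc]
        exact Submodule.smul_mem _ _ (hgen2 (i - 1) l (by omega) (by omega) hl)
    have h2 := Submodule.smul_mem T (a j0)⁻¹ hmem
    rw [smul_smul, inv_mul_cancel₀ haj0, one_smul] at h2
    rw [show ((j0 : ℤ) - 1) = -1 + (j0 : ℤ) by ring]
    exact h2
  have hmulgen : ∀ r : SER m (kpoly d a),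
      (∀ ω ∈ S, r • ω ∈ T) → ∀ ω ∈ T, r • ω ∈ T := by
    intro r hbase ω hω
    rw [hTdef] at hω
    induction hω using Submodule.span_induction with
    | mem x hx => exact hbase x hx
    | zero => rw [smul_zero]; exact Submodule.zero_mem _
    | add x y hx hy ihx ihy => rw [smul_add]; exact Submodule.add_mem _ ihx ihy
    | smul c x hx ih => rw [smul_comm]; exact Submodule.smul_mem _ _ ih
  have hctS : ∀ ω ∈ T, t 1 • ω ∈ T := by
    refine hmulgen (t 1) ?_
    rintro ω (⟨i, l, hl, rfl⟩ | ⟨j, l, hj0', hjd, hl, rfl⟩)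
    · rw [smul_smul, ← mul_assoc, htt]
      exact hgen1 _ _ hl
    · rw [smul_smul, ← mul_assoc, htt]
      by_cases hc : j + 1 ≤ d - 1
      · rw [show (1 : ℤ) + (j : ℤ) = ((j + 1 : ℕ) : ℤ) by omega]
        exact hgen2 (j + 1) l (by omega) hc hl
      · rw [show (1 : ℤ) + (j : ℤ) = ((d : ℕ) : ℤ) by omega]
        exact h4 l hl
  have hctS' : ∀ ω ∈ T, t (-1) • ω ∈ T := by
    refine hmulgen _ ?_
    rintro ω (⟨i, l, hl, rfl⟩ | ⟨j, l, hj0', hjd, hl, rfl⟩)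
    · rw [smul_smul, ← mul_assoc, htt]
      exact hgen1 _ _ hl
    · rw [smul_smul, ← mul_assoc, htt]
      rcases Nat.lt_or_ge j0 j with h | h
      · rw [show (-1 : ℤ) + (j : ℤ) = ((j - 1 : ℕ) : ℤ) by omega]
        exact hgen2 (j - 1) l (by omega) (by omega) hl
      · rw [show (-1 : ℤ) + (j : ℤ) = (j0 : ℤ) - 1 by omega]
        exact h5 l hl
  have hAm : ∀ i : ℤ, (t i * u ^ m) • D (t 1) ∈ T := by
    intro i
    have hexp : (t i * u ^ m) • D (t 1)
        = ∑ i' ∈ Finset.range (d + 1), a i' • ((t (i + i') * u ^ 0) • D (t 1)) := by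
      calc (t i * u ^ m) • D (t 1)
          = ∑ i' ∈ Finset.range (d + 1), (t i * (a i' • t 1 ^ i')) • D (t 1) := by
            rw [hum, Finset.mul_sum, Finset.sum_smul]
        _ = ∑ i' ∈ Finset.range (d + 1), a i' • ((t (i + i') * u ^ 0) • D (t 1)) := by
            refine Finset.sum_congr rfl fun i' _ => ?_
            rw [mul_smul_comm, htn, htt, pow_zero, mul_one, smul_assoc]
    rw [hexp]
    exact Submodule.sum_mem _ fun i' _ => Submodule.smul_mem _ _ (hgen1 _ 0 (by omega))
  have hcuS : ∀ ω ∈ T, u • ω ∈ T := by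
    refine hmulgen u ?_
    rintro ω (⟨i, l, hl, rfl⟩ | ⟨j, l, hj0', hjd, hl, rfl⟩)
    · rw [smul_smul, show u * (t i * u ^ l) = t i * u ^ (l + 1) by rw [pow_succ]; ring]
      by_cases hc : l + 1 ≤ m - 1
      · exact hgen1 _ _ hc
      · rw [show l + 1 = m by omega]
        exact hAm i
    · rw [smul_smul, show u * (t (j : ℤ) * u ^ l) = t (j : ℤ) * u ^ (l + 1) by rw [pow_succ]; ring]
      by_cases hc : l + 1 ≤ m - 2
      · exact hgen2 j (l + 1) hj0' hjd hc
      · rw [show t (j : ℤ) * u ^ (l + 1) = t (j : ℤ) * u ^ 0 * u ^ (m - 1) by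
          rw [show l + 1 = m - 1 by omega, pow_zero, mul_one]]
        exact hB _ 0 (by omega)
  have htns : ∀ n : ℤ, ∀ ω ∈ T, t n • ω ∈ T := by
    intro n
    induction n using Int.induction_on with
    | zero => intro ω hω; rw [ht0, one_smul]; exact hω
    | succ n ih =>
      intro ω hω
      rw [show t ((n : ℤ) + 1) = t 1 * t n by rw [htt]; congr 1; ring, mul_smul]
      exact hctS _ (ih ω hω)
    | pred n ih =>
      intro ω hω
      rw [show t (-(n : ℤ) - 1) = t (-1) * t (-n) by rw [htt]; congr 1; ring, mul_smul]
      exact hctS' _ (ih ω hω)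
  have hmul : ∀ r : SER m (kpoly d a), ∀ ω ∈ T, r • ω ∈ T := by
    intro r
    obtain ⟨p, rfl⟩ := AdjoinRoot.mk_surjective r
    induction p using Polynomial.induction_on with
    | C q =>
      induction q using LaurentPolynomial.induction_on' with
      | add p1 p2 h1 h2 =>
        intro ω hω
        rw [map_add, map_add, add_smul]
        exact Submodule.add_mem _ (h1 ω hω) (h2 ω hω)
      | C_mul_T n c =>
        intro ω hω
        have he : (AdjoinRoot.mk _)
            (Polynomial.C (LaurentPolynomial.C c * LaurentPolynomial.T n)) = c • t n := by
          rw [smul_eq_C_mul', map_mul, map_mul]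
          rfl
        rw [he, smul_assoc]
        exact Submodule.smul_mem _ _ (htns n ω hω)
    | add p q hp hq =>
      intro ω hω
      rw [map_add, add_smul]
      exact Submodule.add_mem _ (hp ω hω) (hq ω hω)
    | monomial n c ih =>
      intro ω hω
      have he : (AdjoinRoot.mk _) (Polynomial.C c * Polynomial.X ^ (n + 1))
          = (AdjoinRoot.mk _) (Polynomial.C c * Polynomial.X ^ n) * u := by
        rw [pow_succ, ← mul_assoc, map_mul]
        rfl
      rw [he, mul_smul]
      exact ih _ (hcuS ω hω)
  have hDtm : ∀ n : ℤ, t n • D (t 1) ∈ T := fun n => by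
    have := hgen1 n 0 (by omega)
    rwa [pow_zero, mul_one] at this
  have hDtneg : D (t (-1)) ∈ T := by
    have h0 : t 1 * t (-1) = 1 := by
      rw [htt, show (1 : ℤ) + -1 = 0 by ring, ht0]
    have hl := D.leibniz (t 1) (t (-1))
    rw [h0, Derivation.map_one_eq_zero] at hl
    have h2 : t 1 • D (t (-1)) = -(t (-1) • D (t 1)) :=
      eq_neg_of_add_eq_zero_left hl.symm
    have h3 : t (-1) • (t 1 • D (t (-1))) = D (t (-1)) := by
      rw [smul_smul, htt, show (-1 : ℤ) + 1 = 0 by ring, ht0, one_smul]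
    rw [← h3, h2, smul_neg]
    refine Submodule.neg_mem _ ?_
    rw [smul_smul, htt]
    exact hDtm _
  have hDtn : ∀ n : ℤ, D (t n) ∈ T := by
    intro n
    induction n using Int.induction_on with
    | zero => rw [ht0, Derivation.map_one_eq_zero]; exact Submodule.zero_mem _
    | succ n ih =>
      rw [show t ((n : ℤ) + 1) = t 1 * t n by rw [htt]; congr 1; ring, D.leibniz]
      exact Submodule.add_mem _ (hmul _ _ ih) (hDtm _)
    | pred n ih =>
      rw [show t (-(n : ℤ) - 1) = t (-1) * t (-n) by rw [htt]; congr 1; ring, D.leibniz]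
      exact Submodule.add_mem _ (hmul _ _ ih) (hmul _ _ hDtneg)
  have hDu : D u ∈ T := by
    rcases Nat.le_one_iff_eq_zero_or_eq_one.mp hj01 with h | h
    · subst h
      have := hgen2 0 0 (Nat.le_refl 0) (by omega) (by omega)
      rwa [Nat.cast_zero, ht0, pow_zero, mul_one, one_smul] at this
    · subst h
      have := h5 0 (by omega)
      rwa [Nat.cast_one, sub_self, ht0, pow_zero, mul_one, one_smul] at this
  have hDall : ∀ r : SER m (kpoly d a), D r ∈ T := by
    intro r
    obtain ⟨p, rfl⟩ := AdjoinRoot.mk_surjective r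
    induction p using Polynomial.induction_on with
    | C q =>
      induction q using LaurentPolynomial.induction_on' with
      | add p1 p2 h1 h2 =>
        rw [map_add, map_add, map_add]
        exact Submodule.add_mem _ h1 h2
      | C_mul_T n c =>
        have he : (AdjoinRoot.mk _)
            (Polynomial.C (LaurentPolynomial.C c * LaurentPolynomial.T n)) = c • t n := by
          rw [smul_eq_C_mul', map_mul, map_mul]
          rfl
        rw [he, Derivation.map_smul]
        exact Submodule.smul_mem _ _ (hDtn n)
    | add p q hp hq =>
      rw [map_add, map_add]
      exact Submodule.add_mem _ hp hq
    | monomial n c ih =>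
      have he : (AdjoinRoot.mk _) (Polynomial.C c * Polynomial.X ^ (n + 1))
          = (AdjoinRoot.mk _) (Polynomial.C c * Polynomial.X ^ n) * u := by
        rw [pow_succ, ← mul_assoc, map_mul]
        rfl
      rw [he, D.leibniz]
      exact Submodule.add_mem _ (hmul _ _ hDu) (hmul _ _ ih)
  rw [eq_top_iff]
  rintro ω -
  have hω : ω ∈ Submodule.span (SER m (kpoly d a))
      (Set.range (KaehlerDifferential.D ℂ (SER m (kpoly d a)))) := by
    rw [KaehlerDifferential.span_range_derivation]
    trivial
  induction hω using Submodule.span_induction with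
  | mem x hx =>
    obtain ⟨y, rfl⟩ := hx
    exact hDall y
  | zero => exact Submodule.zero_mem _
  | add x y hx hy ihx ihy => exact Submodule.add_mem _ ihx ihy
  | smul r x hx ih => exact hmul r x ih

theorem stmt4 (m : ℕ) (hm : 2 ≤ m) (d : ℕ) (hd : 1 ≤ d) (a : ℕ → ℂ)
    (had : a d = 1) (h01 : ¬(a 0 = 0 ∧ a 1 = 0)) :
    (Submodule.span ℂ
      ({ω | ∃ (i : ℤ) (l : ℕ), l ≤ m - 1 ∧
          ω = (tpow m (kpoly d a) i * uu m (kpoly d a) ^ l) •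
            Dd m (kpoly d a) (tpow m (kpoly d a) 1)} ∪
       {ω | ∃ (j l : ℕ), j ≤ d - 1 ∧ l ≤ m - 2 ∧
          ω = (tpow m (kpoly d a) (j : ℤ) * uu m (kpoly d a) ^ l) •
            Dd m (kpoly d a) (uu m (kpoly d a))}) = ⊤)
    ∧ (a 0 = 0 →
      Submodule.span ℂ
      ({ω | ∃ (i : ℤ) (l : ℕ), l ≤ m - 1 ∧
          ω = (tpow m (kpoly d a) i * uu m (kpoly d a) ^ l) •
            Dd m (kpoly d a) (tpow m (kpoly d a) 1)} ∪
       {ω | ∃ (j l : ℕ), 1 ≤ j ∧ j ≤ d - 1 ∧ l ≤ m - 2 ∧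
          ω = (tpow m (kpoly d a) (j : ℤ) * uu m (kpoly d a) ^ l) •
            Dd m (kpoly d a) (uu m (kpoly d a))}) = ⊤) := by
  constructor
  · rcases Classical.em (a 0 = 0) with h0 | h0
    · have h1 : a 1 ≠ 0 := fun h1 => h01 ⟨h0, h1⟩
      have hk := key m hm d hd a had 1 le_rfl h1 (by intro i hi; interval_cases i; exact h0)
      rw [eq_top_iff, ← hk]
      refine Submodule.span_mono ?_
      rintro ω (h | ⟨j, l, _, hj, hl, he⟩)
      · exact Or.inl h
      · exact Or.inr ⟨j, l, hj, hl, he⟩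
    · have hk := key m hm d hd a had 0 (by omega) h0
        (fun i hi => absurd hi (Nat.not_lt_zero i))
      rw [eq_top_iff, ← hk]
      refine Submodule.span_mono ?_
      rintro ω (h | ⟨j, l, _, hj, hl, he⟩)
      · exact Or.inl h
      · exact Or.inr ⟨j, l, hj, hl, he⟩
  · intro h0
    have h1 : a 1 ≠ 0 := fun h1 => h01 ⟨h0, h1⟩
    exact key m hm d hd a had 1 le_rfl h1 (by intro i hi; interval_cases i; exact h0)
end
end

section
/- For the 3-point ring R = ℂ[t,t⁻¹,u] with u² = t² + 4t, the classes of t⁻¹dt and t⁻¹u·dt form a ℂ-basis of Ω¹_R/dR; in particular dim_ℂ Ω¹_R/dR = 2. -/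
noncomputable section

/-- The 3-point polynomial `t² + 4t`. -/
def threePt : Polynomial ℂ := Polynomial.X ^ 2 + Polynomial.C 4 * Polynomial.X

/-- The family `[t⁻¹dt], [t⁻¹u dt]`. -/
def threePtFam : Fin 2 → OmQ 2 threePt :=
  ![cl 2 threePt (tpow 2 threePt (-1) • Dd 2 threePt (tpow 2 threePt 1)),
    cl 2 threePt ((tpow 2 threePt (-1) * uu 2 threePt) •
      Dd 2 threePt (tpow 2 threePt 1))]

/-! ### Auxiliary development -/

namespace S17

open Polynomial AdjoinRoot LaurentPolynomial

local notation "ww" => Polynomial.toLaurent threePt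
local notation "fp" => ((Polynomial.X : Polynomial LA) ^ 2 - Polynomial.C ww)
local notation "R" => SER 2 threePt
local notation "Cz" => (LaurentPolynomial.C : ℂ →+* LA)

/-! #### Coordinates on `R` -/

lemma fp_monic : (fp).Monic := Polynomial.monic_X_pow_sub_C _ two_ne_zero

lemma fp_natDegree : (fp).natDegree = 2 := Polynomial.natDegree_X_pow_sub_C

lemma fp_degree : (fp).degree = 2 := by
  rw [Polynomial.degree_eq_natDegree fp_monic.ne_zero, fp_natDegree]; rfl

def hh : IsAdjoinRootMonic R fp := AdjoinRoot.isAdjoinRootMonic fp fp_monic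

def c0 : R →ₗ[LA] LA := (Polynomial.lcoeff LA 0) ∘ₗ hh.modByMonicHom
def c1 : R →ₗ[LA] LA := (Polynomial.lcoeff LA 1) ∘ₗ hh.modByMonicHom

lemma of_eq_mk (p : LA) : AdjoinRoot.of fp p = AdjoinRoot.mk fp (Polynomial.C p) := rfl

lemma mod_small (g : Polynomial LA) (hg : g.degree < 2) :
    hh.modByMonicHom (AdjoinRoot.mk fp g) = g := by
  have hmap : hh.map g = AdjoinRoot.mk fp g := rfl
  rw [← hmap, IsAdjoinRootMonic.modByMonicHom_map]
  rw [Polynomial.modByMonic_eq_self_iff fp_monic]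
  rw [fp_degree]
  exact hg

@[simp] lemma c0_of (p : LA) : c0 (AdjoinRoot.of fp p) = p := by
  rw [of_eq_mk, c0, LinearMap.comp_apply,
    mod_small _ (lt_of_le_of_lt (Polynomial.degree_C_le) (by norm_num))]
  simp [Polynomial.lcoeff]

@[simp] lemma c1_of (p : LA) : c1 (AdjoinRoot.of fp p) = 0 := by
  rw [of_eq_mk, c1, LinearMap.comp_apply,
    mod_small _ (lt_of_le_of_lt (Polynomial.degree_C_le) (by norm_num))]
  simp [Polynomial.lcoeff, Polynomial.coeff_C]

lemma of_mul_root (p : LA) : AdjoinRoot.of fp p * AdjoinRoot.root fp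
    = AdjoinRoot.mk fp (Polynomial.C p * Polynomial.X) := by
  rw [of_eq_mk]; rfl

lemma degC_mul_X (p : LA) : (Polynomial.C p * Polynomial.X).degree < 2 := by
  apply lt_of_le_of_lt (Polynomial.degree_C_mul_X_le p)
  norm_num

@[simp] lemma c0_of_root (p : LA) :
    c0 (AdjoinRoot.of fp p * AdjoinRoot.root fp) = 0 := by
  rw [of_mul_root, c0, LinearMap.comp_apply, mod_small _ (degC_mul_X p)]
  simp [Polynomial.lcoeff]

@[simp] lemma c1_of_root (p : LA) :
    c1 (AdjoinRoot.of fp p * AdjoinRoot.root fp) = p := by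
  rw [of_mul_root, c1, LinearMap.comp_apply, mod_small _ (degC_mul_X p)]
  simp [Polynomial.lcoeff]

lemma canon (x : R) :
    x = AdjoinRoot.of fp (c0 x) + AdjoinRoot.of fp (c1 x) * AdjoinRoot.root fp := by
  set g := hh.modByMonicHom x with hg
  have hmap : hh.map g = x := hh.map_modByMonicHom x
  have hdeg : g.degree < 2 := by
    rw [hg]
    have h1 : hh.modByMonicHom x = hh.repr x %ₘ fp := rfl
    rw [h1, ← fp_degree]
    exact Polynomial.degree_modByMonic_lt _ fp_monic
  have hdeg1 : g.degree ≤ 1 := by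
    have h2 : (2 : WithBot ℕ) = ((2 : ℕ) : WithBot ℕ) := rfl
    rw [h2, Polynomial.degree_lt_iff_coeff_zero] at hdeg
    rw [Polynomial.degree_le_iff_coeff_zero]
    intro m hm
    have : (2 : ℕ) ≤ m := by exact_mod_cast hm
    exact hdeg m this
  have hrepr := Polynomial.eq_X_add_C_of_degree_le_one hdeg1
  have hrootX : hh.map Polynomial.X = AdjoinRoot.root fp := rfl
  have hC : ∀ p : LA, hh.map (Polynomial.C p) = AdjoinRoot.of fp p := fun p => rfl
  have hc0 : c0 x = g.coeff 0 := rfl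
  have hc1 : c1 x = g.coeff 1 := rfl
  rw [hc0, hc1]
  conv_lhs => rw [← hmap, hrepr]
  rw [map_add, map_mul, hrootX, hC, hC, add_comm]

lemma root_sq :
    (AdjoinRoot.root fp) * (AdjoinRoot.root fp) = AdjoinRoot.of fp ww := by
  have h0 := AdjoinRoot.eval₂_root fp
  simp only [Polynomial.eval₂_sub, Polynomial.eval₂_mul, Polynomial.eval₂_pow,
    Polynomial.eval₂_X, Polynomial.eval₂_C, sub_eq_zero, pow_two] at h0
  exact h0

/-! #### Linear maps on Laurent polynomials -/

def der : LA →ₗ[ℂ] LA := (AddMonoidAlgebra.coeffLinearEquiv (S := ℂ) (M := ℤ) ℂ).symm.toLinearMap ∘ₗ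
  (Finsupp.lsum ℂ fun n : ℤ => (n : ℂ) • Finsupp.lsingle n) ∘ₗ
  (AddMonoidAlgebra.coeffLinearEquiv (S := ℂ) (M := ℤ) ℂ).toLinearMap

lemma der_single (n : ℤ) (a : ℂ) :
    der (Cz a * T n) = Cz ((n : ℂ) * a) * T n := by
  rw [← single_eq_C_mul_T, ← single_eq_C_mul_T, der]
  simp only [LinearMap.coe_comp, Function.comp_apply, LinearEquiv.coe_coe,
    AddMonoidAlgebra.coeffLinearEquiv_apply, AddMonoidAlgebra.coeff_single, Finsupp.lsum_single,
    LinearMap.smul_apply, Finsupp.lsingle_apply, Finsupp.smul_single, smul_eq_mul,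
    AddMonoidAlgebra.coeffLinearEquiv_symm_apply, AddMonoidAlgebra.ofCoeff_single]

def cc : ℤ → ℂ := fun k =>
  if 0 < k then (-1)^(k.toNat - 1) * (Nat.centralBinom (k.toNat - 1) : ℂ) else 0

def lam : LA →ₗ[ℂ] ℂ := (Finsupp.lsum ℂ fun n => cc n • LinearMap.id) ∘ₗ
  (AddMonoidAlgebra.coeffLinearEquiv (S := ℂ) (M := ℤ) ℂ).toLinearMap

lemma lam_single (n : ℤ) (a : ℂ) : lam (Cz a * T n) = cc n * a := by
  rw [← single_eq_C_mul_T, lam]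
  simp only [LinearMap.coe_comp, Function.comp_apply, LinearEquiv.coe_coe,
    AddMonoidAlgebra.coeffLinearEquiv_apply, AddMonoidAlgebra.coeff_single, Finsupp.lsum_single]
  simp

def lap0 : LA →ₗ[ℂ] ℂ := Finsupp.lapply 0 ∘ₗ
  (AddMonoidAlgebra.coeffLinearEquiv (S := ℂ) (M := ℤ) ℂ).toLinearMap

lemma lap0_single (n : ℤ) (a : ℂ) :
    lap0 (Cz a * T n) = if n = 0 then a else 0 := by
  rw [← single_eq_C_mul_T, lap0]
  simp only [LinearMap.coe_comp, Function.comp_apply, LinearEquiv.coe_coe,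
    AddMonoidAlgebra.coeffLinearEquiv_apply, AddMonoidAlgebra.coeff_single, Finsupp.lapply_apply,
    Finsupp.single_apply]

lemma CT_mul (m n : ℤ) (a b : ℂ) :
    (Cz a * T m) * (Cz b * T n) = Cz (a*b) * T (m+n) := by
  rw [← single_eq_C_mul_T, ← single_eq_C_mul_T, ← single_eq_C_mul_T]
  exact AddMonoidAlgebra.single_mul_single ..

lemma smul_CT (a b : ℂ) (n : ℤ) :
    a • (Cz b * T n) = Cz (a*b) * T n := by
  rw [← single_eq_C_mul_T, ← single_eq_C_mul_T]
  rw [AddMonoidAlgebra.smul_single, smul_eq_mul]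

lemma CT_add_same (a b : ℂ) (k : ℤ) : Cz a * T k + Cz b * T k = Cz (a+b) * T k := by
  rw [map_add, add_mul]

lemma CT_congr {a b : ℂ} (k : ℤ) (h : a = b) : Cz a * T k = Cz b * T k := by rw [h]

def ww2 : LA := Cz 1 * T 2 + Cz 2 * T 1

lemma ww_CT : ww = Cz 1 * T 2 + Cz 4 * T 1 := by
  rw [map_one, one_mul]
  simp [threePt, T_pow]

def beta : LA →ₗ[ℂ] LA := (-(1/2 : ℂ)) • der

def alpha : LA →ₗ[ℂ] LA :=
  (-(1/2 : ℂ)) • ((LinearMap.mulLeft ℂ ww) ∘ₗ der + LinearMap.mulLeft ℂ ww2)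

lemma beta_CT (n : ℤ) (a : ℂ) :
    beta (Cz a * T n) = Cz (-(1/2) * ((n:ℂ) * a)) * T n := by
  rw [beta, LinearMap.smul_apply, der_single, smul_CT]

lemma alpha_CT (n : ℤ) (a : ℂ) :
    alpha (Cz a * T n)
      = Cz (-(1/2) * ((n:ℂ) * a + a)) * T (2 + n)
        + Cz (-(1/2) * (4 * ((n:ℂ) * a) + 2 * a)) * T (1 + n) := by
  rw [alpha, LinearMap.smul_apply, LinearMap.add_apply, LinearMap.comp_apply, der_single,
    LinearMap.mulLeft_apply, LinearMap.mulLeft_apply, ww_CT, ww2]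
  rw [add_mul, add_mul, CT_mul, CT_mul, CT_mul, CT_mul]
  simp only [smul_add, smul_CT]
  rw [add_add_add_comm, CT_add_same, CT_add_same]
  exact congrArg₂ (· + ·) (CT_congr _ (by ring)) (CT_congr _ (by ring))

lemma oneT (l : ℤ) : (T l : LA) = Cz 1 * T l := by rw [map_one, one_mul]

lemma id1 (m n : ℤ) : T m * beta (T n) + T n * beta (T m) = beta (T (m+n)) := by
  conv_rhs => rw [oneT (m+n), beta_CT]
  rw [oneT m, oneT n, beta_CT, beta_CT, CT_mul, CT_mul, add_comm n m, CT_add_same]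
  exact CT_congr _ (by push_cast; ring)

lemma id2 (m n : ℤ) : T m * alpha (T n) + (T n * beta (T m)) * ww = alpha (T (m+n)) := by
  conv_rhs => rw [oneT (m+n), alpha_CT]
  rw [oneT m, oneT n, alpha_CT, beta_CT, ww_CT]
  simp only [mul_add, add_mul, CT_mul]
  have e1 : m + (2 + n) = 2 + (m + n) := by ring
  have e2 : m + (1 + n) = 1 + (m + n) := by ring
  have e3 : n + m + 2 = 2 + (m + n) := by ring
  have e4 : n + m + 1 = 1 + (m + n) := by ring
  rw [e1, e2, e3, e4, add_add_add_comm, CT_add_same, CT_add_same]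
  exact congrArg₂ (· + ·) (CT_congr _ (by push_cast; ring)) (CT_congr _ (by push_cast; ring))

lemma id4 (m n : ℤ) : T m * alpha (T n) + T n * alpha (T m) = beta (T (m+n) * ww) := by
  conv_rhs => rw [ww_CT, mul_add, oneT (m+n), CT_mul, CT_mul, map_add, beta_CT, beta_CT]
  rw [oneT m, oneT n, alpha_CT, alpha_CT]
  simp only [mul_add, add_mul, CT_mul]
  have e1 : m + (2 + n) = 2 + (m + n) := by ring
  have e2 : m + (1 + n) = 1 + (m + n) := by ring
  have e3 : n + (2 + m) = 2 + (m + n) := by ring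
  have e4 : n + (1 + m) = 1 + (m + n) := by ring
  have e5 : m + n + 2 = 2 + (m + n) := by ring
  have e6 : m + n + 1 = 1 + (m + n) := by ring
  rw [e1, e2, e3, e4, e5, e6, add_add_add_comm, CT_add_same, CT_add_same]
  exact congrArg₂ (· + ·) (CT_congr _ (by push_cast; ring)) (CT_congr _ (by push_cast; ring))

/-! #### The derivation `D` on `R` -/

def ofL : LA →ₗ[ℂ] R := (Algebra.linearMap LA R).restrictScalars ℂ

lemma ofL_apply (p : LA) : ofL p = AdjoinRoot.of fp p := rfl

def Dlin : R →ₗ[ℂ] R :=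
  ofL ∘ₗ alpha ∘ₗ (c1.restrictScalars ℂ)
    + (LinearMap.mulRight ℂ (A := R) (AdjoinRoot.root fp)) ∘ₗ ofL ∘ₗ beta ∘ₗ (c0.restrictScalars ℂ)

lemma Dlin_apply (x : R) :
    Dlin x = AdjoinRoot.of fp (alpha (c1 x))
      + AdjoinRoot.of fp (beta (c0 x)) * AdjoinRoot.root fp := rfl

lemma Dlin_of (p : LA) :
    Dlin (AdjoinRoot.of fp p) = AdjoinRoot.of fp (beta p) * AdjoinRoot.root fp := by
  rw [Dlin_apply, c1_of, c0_of, map_zero, map_zero, zero_add]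

lemma Dlin_of_root (p : LA) :
    Dlin (AdjoinRoot.of fp p * AdjoinRoot.root fp) = AdjoinRoot.of fp (alpha p) := by
  rw [Dlin_apply, c1_of_root, c0_of_root, map_zero, map_zero, zero_mul, add_zero]

/-- The set of monomials `t^n`, `t^n u` spanning `R` over `ℂ`. -/
def Mon : Set R :=
  (Set.range fun n : ℤ => AdjoinRoot.of fp (T n)) ∪
    (Set.range fun n : ℤ => AdjoinRoot.of fp (T n) * AdjoinRoot.root fp)

lemma smul_of (a : ℂ) (p : LA) :
    a • AdjoinRoot.of fp p = AdjoinRoot.of fp (Cz a * p) := by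
  rw [Algebra.smul_def, IsScalarTower.algebraMap_apply ℂ LA R, AdjoinRoot.algebraMap_eq,
    ← map_mul]
  rfl

lemma of_mem_span (p : LA) : AdjoinRoot.of fp p ∈ Submodule.span ℂ Mon := by
  induction p using LaurentPolynomial.induction_on' with
  | add p q hp hq => rw [map_add]; exact Submodule.add_mem _ hp hq
  | C_mul_T n a =>
      rw [← smul_of]
      exact Submodule.smul_mem _ _ (Submodule.subset_span (Or.inl ⟨n, rfl⟩))

lemma of_root_mem_span (p : LA) :
    AdjoinRoot.of fp p * AdjoinRoot.root fp ∈ Submodule.span ℂ Mon := by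
  induction p using LaurentPolynomial.induction_on' with
  | add p q hp hq => rw [map_add, add_mul]; exact Submodule.add_mem _ hp hq
  | C_mul_T n a =>
      have h5 : a • (AdjoinRoot.of fp (T n) * AdjoinRoot.root fp)
          = AdjoinRoot.of fp (Cz a * T n) * AdjoinRoot.root fp := by
        rw [← smul_mul_assoc, smul_of]
      rw [← h5]
      exact Submodule.smul_mem _ _ (Submodule.subset_span (Or.inr ⟨n, rfl⟩))

lemma span_Mon : Submodule.span ℂ Mon = ⊤ := by
  rw [eq_top_iff]
  rintro x -
  rw [canon x]
  exact Submodule.add_mem _ (of_mem_span _) (of_root_mem_span _)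

lemma mul_shuffle (a b c : R) : (a * c) * (b * c) = (a * b) * (c * c) := by ring
lemma mul_shuffle2 (a b c : R) : (a * c) * b = (a * b) * c := by ring

lemma leib2 (m n : ℤ) :
    Dlin (AdjoinRoot.of fp (T m) * (AdjoinRoot.of fp (T n) * AdjoinRoot.root fp))
      = AdjoinRoot.of fp (T m) * Dlin (AdjoinRoot.of fp (T n) * AdjoinRoot.root fp)
        + (AdjoinRoot.of fp (T n) * AdjoinRoot.root fp) * Dlin (AdjoinRoot.of fp (T m)) := by
  rw [← mul_assoc, ← map_mul, ← T_add, Dlin_of_root, Dlin_of, Dlin_of_root]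
  rw [mul_shuffle, root_sq, ← map_mul, ← map_mul, ← map_mul, ← map_add, id2]

lemma leibniz_mon (x y : R) (hx : x ∈ Mon) (hy : y ∈ Mon) :
    Dlin (x * y) = x * Dlin y + y * Dlin x := by
  rcases hx with ⟨m, rfl⟩ | ⟨m, rfl⟩ <;> rcases hy with ⟨n, rfl⟩ | ⟨n, rfl⟩
  · rw [← map_mul, ← T_add, Dlin_of, Dlin_of, Dlin_of]
    rw [← mul_assoc, ← mul_assoc, ← map_mul, ← map_mul, ← add_mul, ← map_add, id1]
  · exact leib2 m n
  · rw [mul_comm, add_comm]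
    exact leib2 n m
  · rw [mul_shuffle, root_sq, ← map_mul, ← map_mul, ← T_add, Dlin_of,
      Dlin_of_root, Dlin_of_root]
    rw [mul_shuffle2, ← map_mul, mul_shuffle2, ← map_mul, ← add_mul, ← map_add, id4]

lemma leibniz_all (x y : R) :
    Dlin (x * y) = x * Dlin y + y * Dlin x := by
  have hx : x ∈ Submodule.span ℂ Mon := by rw [span_Mon]; trivial
  induction hx using Submodule.span_induction generalizing y with
  | mem x hx =>
      have hy : y ∈ Submodule.span ℂ Mon := by rw [span_Mon]; trivial
      induction hy using Submodule.span_induction with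
      | mem y hy => exact leibniz_mon _ _ hx hy
      | zero => simp
      | add y z hy hz ihy ihz =>
          rw [mul_add, map_add, ihy, ihz, map_add]; ring
      | smul a y hy ihy =>
          rw [mul_smul_comm, map_smul, ihy, map_smul, mul_smul_comm, smul_mul_assoc, smul_add]
  | zero => simp
  | add x z hx hz ihx ihz =>
      rw [add_mul, map_add, ihx y, ihz y, map_add]; ring
  | smul a x hx ihx =>
      rw [smul_mul_assoc, map_smul, ihx y, map_smul, smul_mul_assoc, mul_smul_comm, smul_add]


/-! #### The derivation, packaged -/

def DD : Derivation ℂ R R where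
  toLinearMap := Dlin
  map_one_eq_zero' := by
    have h1 : (1 : R) = AdjoinRoot.of fp (Cz 1 * T 0) := by
      rw [T_zero, mul_one, map_one, map_one]
    show Dlin 1 = 0
    rw [h1, Dlin_of, beta_CT]
    have : (-(1/2) * (((0:ℤ):ℂ) * 1)) = 0 := by norm_num
    rw [this, map_zero, zero_mul, map_zero, zero_mul]
  leibniz' := fun a b => by
    show Dlin (a * b) = a • Dlin b + b • Dlin a
    rw [smul_eq_mul, smul_eq_mul]
    exact leibniz_all a b

lemma DD_apply (x : R) : DD x = Dlin x := rfl

/-! #### Vanishing of the residue functionals on derivatives -/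

lemma cc_nonpos {k : ℤ} (hk : k ≤ 0) : cc k = 0 := by
  rw [cc, if_neg (by omega)]

lemma cc_succ (m : ℕ) : cc ((m:ℤ)+1) = (-1)^m * (Nat.centralBinom m : ℂ) := by
  rw [cc, if_pos (by omega)]
  have h1 : (((m:ℤ)+1)).toNat = m + 1 := by omega
  rw [h1]
  simp

lemma cc_rec (n : ℤ) : ((n:ℂ)+1) * cc (2+n) + (4*(n:ℂ)+2) * cc (1+n) = 0 := by
  rcases le_or_gt n (-2) with h | h
  · rw [cc_nonpos (by omega), cc_nonpos (by omega)]
    ring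
  rcases eq_or_lt_of_le (by omega : -1 ≤ n) with h1 | h1
  · rw [← h1]
    norm_num [cc_nonpos (le_refl (0:ℤ))]
  obtain ⟨m, rfl⟩ := Int.eq_ofNat_of_zero_le (by omega : 0 ≤ n)
  have h2 : (2 + (m:ℤ)) = ((m+1 : ℕ):ℤ) + 1 := by push_cast; ring
  have h3 : (1 + (m:ℤ)) = ((m : ℕ):ℤ) + 1 := by push_cast; ring
  rw [h2, h3, cc_succ, cc_succ]
  have key : ((m:ℂ) + 1) * (Nat.centralBinom (m+1) : ℂ)
      = 2 * (2*(m:ℂ)+1) * (Nat.centralBinom m : ℂ) := by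
    have h4 := congrArg (fun x : ℕ => (x : ℂ)) (Nat.succ_mul_centralBinom_succ m)
    push_cast at h4
    linear_combination h4
  have hsg : ((-1:ℂ))^(m+1) = -(-1:ℂ)^m := by rw [pow_succ]; ring
  rw [hsg]
  push_cast
  linear_combination (-(-1:ℂ)^m) * key

lemma lam_alpha (p : LA) : lam (alpha p) = 0 := by
  induction p using LaurentPolynomial.induction_on' with
  | add p q hp hq => rw [map_add, map_add, hp, hq, add_zero]
  | C_mul_T n a =>
      rw [alpha_CT, map_add, lam_single, lam_single]
      linear_combination (-(1/2) * a) * cc_rec n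

lemma lap0_beta (p : LA) : lap0 (beta p) = 0 := by
  induction p using LaurentPolynomial.induction_on' with
  | add p q hp hq => rw [map_add, map_add, hp, hq, add_zero]
  | C_mul_T n a =>
      rw [beta_CT, lap0_single]
      rcases eq_or_ne n 0 with h | h
      · subst h
        norm_num
      · rw [if_neg h]

def mu1 : R →ₗ[ℂ] ℂ := lam ∘ₗ (c0.restrictScalars ℂ)
def mu2 : R →ₗ[ℂ] ℂ := lap0 ∘ₗ (c1.restrictScalars ℂ)

lemma c0_Dlin (x : R) : c0 (Dlin x) = alpha (c1 x) := by
  rw [Dlin_apply, map_add, c0_of, c0_of_root, add_zero]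

lemma c1_Dlin (x : R) : c1 (Dlin x) = beta (c0 x) := by
  rw [Dlin_apply, map_add, c1_of, c1_of_root, zero_add]

lemma mu1_Dlin (x : R) : mu1 (Dlin x) = 0 := by
  show lam (c0 (Dlin x)) = 0
  rw [c0_Dlin]; exact lam_alpha _

lemma mu2_Dlin (x : R) : mu2 (Dlin x) = 0 := by
  show lap0 (c1 (Dlin x)) = 0
  rw [c1_Dlin]; exact lap0_beta _


/-! #### Differential forms: basic identities -/

local notation "Om" => KaehlerDifferential ℂ R
local notation "dd" => Dd 2 threePt
local notation "tq" => tpow 2 threePt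
local notation "U" => uu 2 threePt

def dt : Om := dd (tq 1)
def om1 : Om := tq (-1) • dd (tq 1)
def om2 : Om := (tq (-1) * U) • dd (tq 1)

def NN : Submodule ℂ Om := Submodule.span ℂ {om1, om2} ⊔ dR 2 threePt

lemma tq_mul (a b : ℤ) : tq a * tq b = tq (a+b) := by
  rw [tpow, tpow, tpow, ← map_mul, ← T_add]

lemma tq_zero : tq 0 = 1 := by rw [tpow, T_zero, map_one]

lemma U_sq : U * U = AdjoinRoot.of fp ww := root_sq

lemma d_mem (x : R) : dd x ∈ NN := Submodule.mem_sup_right ⟨x, rfl⟩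

lemma om1_mem : om1 ∈ NN :=
  Submodule.mem_sup_left (Submodule.subset_span (by left; rfl))

lemma om2_mem : om2 ∈ NN :=
  Submodule.mem_sup_left (Submodule.subset_span (by right; rfl))

lemma dtq_neg_one : dd (tq (-1)) = -(tq (-2) • dt) := by
  have h0 : tq (-1) * tq 1 = 1 := by rw [tq_mul]; norm_num [tq_zero]
  have h2 := (dd).leibniz (tq (-1)) (tq 1)
  rw [h0, Derivation.map_one_eq_zero] at h2
  have h3 : tq (-1) • (dd (tq 1)) + tq 1 • dd (tq (-1)) = 0 := h2.symm
  have h4 : tq 1 • dd (tq (-1)) = -(tq (-1) • dd (tq 1)) :=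
    eq_neg_of_add_eq_zero_right h3
  have h5 : dd (tq (-1)) = (tq (-1) * tq 1) • dd (tq (-1)) := by
    rw [h0, one_smul]
  rw [h5, mul_smul, h4, smul_neg, smul_smul, tq_mul]
  norm_num
  rfl

lemma dT (n : ℤ) : dd (tq n) = (n:ℂ) • (tq (n-1) • dt) := by
  induction n using Int.induction_on with
  | zero =>
      rw [tq_zero, Derivation.map_one_eq_zero]
      norm_num
  | succ i ih =>
      have e0 : ((i:ℤ)+1) = (i:ℤ) + 1 := rfl
      rw [← tq_mul i 1, (dd).leibniz, ih]
      rw [smul_comm, smul_smul, tq_mul]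
      have e1 : (1:ℤ) + ((i:ℤ) - 1) = i := by ring
      rw [e1]
      have e2 : ((i:ℤ) + 1 - 1) = (i:ℤ) := by ring
      rw [e2]
      have e3 : (((i:ℤ)+1 : ℤ):ℂ) = (i:ℂ) + 1 := by push_cast; ring
      rw [e3, add_smul, one_smul, add_comm]
      rfl
  | pred i ih =>
      have e0 : (-(i:ℤ) - 1) = (-(i:ℤ)) + (-1) := by ring
      rw [e0, ← tq_mul, (dd).leibniz, ih, dtq_neg_one]
      rw [smul_comm, smul_smul, tq_mul, smul_neg, smul_smul, tq_mul]
      have e1 : (-1:ℤ) + (-(i:ℤ) - 1) = -(i:ℤ) + -1 - 1 := by ring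
      have e2 : (-(i:ℤ)) + -2 = -(i:ℤ) + -1 - 1 := by ring
      rw [e1, e2]
      have e3 : ((-(i:ℤ) + -1 : ℤ):ℂ) = -(i:ℂ) + -1 := by push_cast; ring
      rw [e3]
      have e4 : ((-(i:ℤ) : ℤ):ℂ) = -(i:ℂ) := by push_cast; ring
      rw [e4, add_smul, neg_one_smul ℂ]
      exact add_comm _ _


/-! #### Reduction of `t^a dt` and `t^a u dt` modulo `NN` -/

def tau (a : ℤ) : Om := (tq a * U) • dt

lemma tau_neg_one : tau (-1) = om2 := rfl

lemma int_cast_ne (z : ℤ) (hz : z ≠ 0) : ((z:ℂ)) ≠ 0 := Int.cast_ne_zero.mpr hz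

lemma tdt_mem (a : ℤ) : tq a • dt ∈ NN := by
  rcases eq_or_ne a (-1) with rfl | ha
  · exact om1_mem
  · have hz : ((a:ℂ)+1) ≠ 0 := by
      have h1 : ((a:ℂ)+1) = ((a+1 : ℤ) : ℂ) := by push_cast; ring
      rw [h1]
      exact int_cast_ne _ (by omega)
    have h := dT (a+1)
    rw [show a+1-1 = a from by ring] at h
    rw [show ((a+1 : ℤ):ℂ) = (a:ℂ)+1 from by push_cast; ring] at h
    have h2 : tq a • dt = ((a:ℂ)+1)⁻¹ • dd (tq (a+1)) := by
      rw [h, smul_smul, inv_mul_cancel₀ hz, one_smul]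
    rw [h2]
    exact Submodule.smul_mem _ _ (d_mem _)

lemma hww : AdjoinRoot.of fp ww = tq 2 + (4:ℂ) • tq 1 := by
  have h4 : (4:ℂ) • tq 1 = AdjoinRoot.of fp (Cz 4 * T 1) := smul_of 4 (T 1)
  have h5 : AdjoinRoot.of fp (Cz 1 * T 2 + Cz 4 * T 1) = tq 2 + (4:ℂ) • tq 1 := by
    rw [map_add, map_one, one_mul, h4]
    rfl
  exact (congrArg (AdjoinRoot.of fp) ww_CT).trans h5

lemma udu : U • dd U = tq 1 • dt + (2:ℂ) • dt := by
  have h1 : dd (U * U) = U • dd U + U • dd U := (dd).leibniz U U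
  have h2 : dd (U * U) = (2:ℂ) • (tq 1 • dt) + (4:ℂ) • dt := by
    rw [U_sq, hww, map_add, Derivation.map_smul, dT 2, dT 1]
    rw [show (2:ℤ)-1 = 1 from by norm_num, show (1:ℤ)-1 = 0 from by norm_num, tq_zero, one_smul]
    rw [show (((2:ℤ)):ℂ) = 2 from by norm_num, show (((1:ℤ)):ℂ) = 1 from by norm_num, one_smul]
  have h3 : (2:ℂ) • (U • dd U) = (2:ℂ) • (tq 1 • dt + (2:ℂ) • dt) := by
    rw [two_smul]
    rw [← h1, h2, smul_add, smul_smul]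
    norm_num
  exact smul_right_injective Om (two_ne_zero) h3

lemma dtu (b : ℤ) : dd (tq b * U) = tq b • dd U + (b:ℂ) • tau (b-1) := by
  rw [(dd).leibniz, dT b]
  congr 1
  rw [smul_comm, smul_smul, mul_comm]
  rfl

lemma idA (a : ℤ) :
    tq (a+2) • dd U + (4:ℂ) • (tq (a+1) • dd U) = tau (a+1) + (2:ℂ) • tau a := by
  have h2 := congrArg (fun z : Om => (tq a * U) • z) udu
  simp only [smul_add] at h2
  have l1 : (tq a * U) • (U • dd U) = tq (a+2) • dd U + (4:ℂ) • (tq (a+1) • dd U) := by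
    rw [smul_smul, mul_assoc, U_sq]
    rw [hww, mul_add, tq_mul, mul_smul_comm, tq_mul, add_smul, smul_assoc]
  have l2 : (tq a * U) • (tq 1 • dt) = tau (a+1) := by
    rw [smul_smul, mul_right_comm, tq_mul]
    rfl
  have l3 : (tq a * U) • ((2:ℂ) • dt) = (2:ℂ) • tau a := by
    rw [smul_comm]
    rfl
  rw [l1, l2, l3] at h2
  exact h2

lemma Rel (a : ℤ) :
    ((a:ℂ)+3) • tau (a+1) + (4*(a:ℂ)+6) • tau a
      = dd (tq (a+2) * U + (4:ℂ) • (tq (a+1) * U)) := by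
  have d1 : dd (tq (a+2) * U) = tq (a+2) • dd U + ((a:ℂ)+2) • tau (a+1) := by
    rw [dtu, show a+2-1 = a+1 from by ring, show ((a+2 : ℤ):ℂ) = (a:ℂ)+2 from by push_cast; ring]
  have d2 : dd (tq (a+1) * U) = tq (a+1) • dd U + ((a:ℂ)+1) • tau a := by
    rw [dtu, show a+1-1 = a from by ring, show ((a+1 : ℤ):ℂ) = (a:ℂ)+1 from by push_cast; ring]
  calc ((a:ℂ)+3) • tau (a+1) + (4*(a:ℂ)+6) • tau a
      = (tau (a+1) + (2:ℂ) • tau a) + (((a:ℂ)+2) • tau (a+1) + (4:ℂ) • (((a:ℂ)+1) • tau a)) := by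
        module
    _ = (tq (a+2) • dd U + (4:ℂ) • (tq (a+1) • dd U))
          + (((a:ℂ)+2) • tau (a+1) + (4:ℂ) • (((a:ℂ)+1) • tau a)) := by rw [idA]
    _ = (tq (a+2) • dd U + ((a:ℂ)+2) • tau (a+1))
          + (4:ℂ) • (tq (a+1) • dd U + ((a:ℂ)+1) • tau a) := by module
    _ = dd (tq (a+2) * U) + (4:ℂ) • dd (tq (a+1) * U) := by rw [d1, d2]
    _ = dd (tq (a+2) * U + (4:ℂ) • (tq (a+1) * U)) := by
        rw [map_add, Derivation.map_smul]

lemma tau_mem (a : ℤ) : tau a ∈ NN := by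
  refine Int.inductionOn' a (-1) ?_ (fun k hk ih => ?_) (fun k hk ih => ?_)
  · rw [tau_neg_one]; exact om2_mem
  ·
      have hz : ((k:ℂ)+3) ≠ 0 := by
        rw [show ((k:ℂ)+3) = ((k+3 : ℤ):ℂ) from by push_cast; ring]
        exact int_cast_ne _ (by omega)
      have r1 : ((k:ℂ)+3) • tau (k+1)
          = dd (tq (k+2) * U + (4:ℂ) • (tq (k+1) * U)) - (4*(k:ℂ)+6) • tau k :=
        eq_sub_of_add_eq (Rel k)
      have h2 : tau (k+1) = ((k:ℂ)+3)⁻¹ •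
          (dd (tq (k+2) * U + (4:ℂ) • (tq (k+1) * U)) - (4*(k:ℂ)+6) • tau k) := by
        rw [← r1, smul_smul, inv_mul_cancel₀ hz, one_smul]
      rw [h2]
      exact Submodule.smul_mem _ _
        (Submodule.sub_mem _ (d_mem _) (Submodule.smul_mem _ _ ih))
  ·
      have r := Rel (k-1)
      rw [show k-1+1 = k from by ring] at r
      rw [show (((k-1:ℤ)):ℂ)+3 = (k:ℂ)+2 from by push_cast; ring] at r
      rw [show 4*(((k-1:ℤ)):ℂ)+6 = 4*(k:ℂ)+2 from by push_cast; ring] at r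
      rw [add_comm] at r
      have hz : (4*(k:ℂ)+2) ≠ 0 := by
        rw [show (4*(k:ℂ)+2) = ((4*k+2 : ℤ):ℂ) from by push_cast; ring]
        exact int_cast_ne _ (by omega)
      have r1 : (4*(k:ℂ)+2) • tau (k-1)
          = dd (tq (k-1+2) * U + (4:ℂ) • (tq k * U)) - ((k:ℂ)+2) • tau k :=
        eq_sub_of_add_eq r
      have h2 : tau (k-1) = (4*(k:ℂ)+2)⁻¹ •
          (dd (tq (k-1+2) * U + (4:ℂ) • (tq k * U)) - ((k:ℂ)+2) • tau k) := by
        rw [← r1, smul_smul, inv_mul_cancel₀ hz, one_smul]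
      rw [h2]
      exact Submodule.smul_mem _ _
        (Submodule.sub_mem _ (d_mem _) (Submodule.smul_mem _ _ ih))


/-! #### Full spanning -/

lemma du_mem (b : ℤ) : tq b • dd U ∈ NN := by
  have h := eq_sub_of_add_eq (dtu b).symm
  rw [h]
  exact Submodule.sub_mem _ (d_mem _) (Submodule.smul_mem _ _ (tau_mem _))

lemma tu_du_mem (b : ℤ) : (tq b * U) • dd U ∈ NN := by
  have h := congrArg (fun z : Om => tq b • z) udu
  simp only [smul_add] at h
  rw [smul_smul] at h
  have l2 : tq b • tq 1 • dt = tq (b+1) • dt := by rw [smul_smul, tq_mul]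
  have l3 : tq b • (2:ℂ) • dt = (2:ℂ) • (tq b • dt) := by rw [smul_comm]
  rw [l2, l3] at h
  rw [h]
  exact Submodule.add_mem _ (tdt_mem _) (Submodule.smul_mem _ _ (tdt_mem _))

lemma tau_eq (a : ℤ) : (tq a * U) • dt = tau a := rfl

lemma tq_smul_tau (m c : ℤ) : tq m • tau c = tau (m+c) := by
  show tq m • ((tq c * U) • dt) = _
  rw [smul_smul, ← mul_assoc, tq_mul]
  rfl

lemma tu_smul_tau (m c : ℤ) :
    (tq m * U) • tau c = tq (m+c+2) • dt + (4:ℂ) • (tq (m+c+1) • dt) := by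
  show (tq m * U) • ((tq c * U) • dt) = _
  rw [smul_smul, mul_shuffle, U_sq, hww, tq_mul, mul_add, tq_mul, mul_smul_comm, tq_mul]
  rw [add_smul, smul_assoc]

lemma gen_mem (x y : R) (hx : x ∈ Mon) (hy : y ∈ Mon) : x • dd y ∈ NN := by
  have e_of : ∀ n : ℤ, AdjoinRoot.of fp (T n) = tq n := fun n => rfl
  have e_root : AdjoinRoot.root fp = U := rfl
  rcases hx with ⟨m, rfl⟩ | ⟨m, rfl⟩ <;> rcases hy with ⟨n, rfl⟩ | ⟨n, rfl⟩ <;>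
    dsimp only <;> simp only [e_of, e_root]
  · -- tq m • dd (tq n)
    rw [dT n, smul_comm, smul_smul, tq_mul]
    exact Submodule.smul_mem _ _ (tdt_mem _)
  · -- tq m • dd (tq n * U)
    rw [dtu n, smul_add, smul_smul, tq_mul, smul_comm, tq_smul_tau]
    exact Submodule.add_mem _ (du_mem _) (Submodule.smul_mem _ _ (tau_mem _))
  · -- (tq m * U) • dd (tq n)
    rw [dT n, smul_comm, smul_smul, mul_right_comm, tq_mul, tau_eq]
    exact Submodule.smul_mem _ _ (tau_mem _)
  · -- (tq m * U) • dd (tq n * U)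
    rw [dtu n, smul_add]
    refine Submodule.add_mem _ ?_ ?_
    · rw [smul_smul, mul_right_comm, tq_mul]
      exact tu_du_mem _
    · rw [smul_comm, tu_smul_tau]
      exact Submodule.smul_mem _ _
        (Submodule.add_mem _ (tdt_mem _) (Submodule.smul_mem _ _ (tdt_mem _)))

lemma NN_top : NN = ⊤ := by
  rw [eq_top_iff]
  rintro w -
  have hw : w ∈ Submodule.span R (Set.range ⇑(KaehlerDifferential.D ℂ R)) := by
    rw [KaehlerDifferential.span_range_derivation]; trivial
  have key : ∀ w ∈ Submodule.span R (Set.range ⇑(KaehlerDifferential.D ℂ R)),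
      ∀ r : R, r • w ∈ NN := by
    intro w hw
    induction hw using Submodule.span_induction with
    | mem x hx =>
        obtain ⟨y, rfl⟩ := hx
        intro r
        have hys : ∀ y, (∀ r : R, r • dd y ∈ NN) := by
          intro y
          have hy : y ∈ Submodule.span ℂ Mon := by rw [span_Mon]; trivial
          induction hy using Submodule.span_induction with
          | mem y hy =>
              intro r
              have hr : r ∈ Submodule.span ℂ Mon := by rw [span_Mon]; trivial
              induction hr using Submodule.span_induction with
              | mem r hr => exact gen_mem r y hr hy
              | zero => rw [zero_smul]; exact Submodule.zero_mem _
              | add r s hrm hsm ihr ihs =>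
                  rw [add_smul]; exact Submodule.add_mem _ ihr ihs
              | smul a r hrm ihr =>
                  rw [smul_assoc]; exact Submodule.smul_mem _ _ ihr
          | zero =>
              intro r
              rw [map_zero, smul_zero]; exact Submodule.zero_mem _
          | add y z hym hzm ihy ihz =>
              intro r
              rw [map_add, smul_add]; exact Submodule.add_mem _ (ihy r) (ihz r)
          | smul a y hym ihy =>
              intro r
              rw [Derivation.map_smul, smul_comm]
              exact Submodule.smul_mem _ _ (ihy r)
        exact hys y r
    | zero => intro r; rw [smul_zero]; exact Submodule.zero_mem _
    | add x z hxm hzm ihx ihz =>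
        intro r; rw [smul_add]; exact Submodule.add_mem _ (ihx r) (ihz r)
    | smul r' x hxm ihx =>
        intro r
        rw [smul_smul]
        exact ihx (r * r')
  have := key w hw 1
  rwa [one_smul] at this


/-! #### The functionals on `Ω¹/dR` -/

def phi : Om →ₗ[R] R := DD.liftKaehlerDifferential

lemma phi_d (x : R) : phi (dd x) = Dlin x :=
  Derivation.liftKaehlerDifferential_comp_D DD x

lemma beta_T1 : beta (T 1) = Cz (-(1/2)) * T 1 := by
  have h := beta_CT 1 1
  rw [← oneT] at h
  rw [h]
  exact CT_congr _ (by norm_num)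

lemma Dlin_tq1 : Dlin (tq 1) = AdjoinRoot.of fp (Cz (-(1/2)) * T 1) * AdjoinRoot.root fp := by
  have h : Dlin (AdjoinRoot.of fp (T 1))
      = AdjoinRoot.of fp (beta (T 1)) * AdjoinRoot.root fp := Dlin_of (T 1)
  rw [beta_T1] at h
  exact h

lemma phi_om1 : phi om1 = AdjoinRoot.of fp (Cz (-(1/2)) * T 0) * AdjoinRoot.root fp := by
  show phi (tq (-1) • dd (tq 1)) = _
  rw [map_smul, phi_d, smul_eq_mul, Dlin_tq1, ← mul_assoc]
  have : tq (-1) * AdjoinRoot.of fp (Cz (-(1/2)) * T 1) = AdjoinRoot.of fp (Cz (-(1/2)) * T 0) := by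
    show AdjoinRoot.of fp (T (-1)) * _ = _
    rw [← map_mul, oneT (-1), CT_mul]
    have e : (-1 + 1 : ℤ) = 0 := by norm_num
    rw [e]
    exact congrArg _ (CT_congr _ (by norm_num))
  rw [this]

lemma qval : (T (-1) * (Cz (-(1/2)) * T 1)) * ww = Cz (-(1/2)) * T 2 + Cz (-2) * T 1 := by
  rw [oneT (-1), CT_mul, ww_CT, mul_add, CT_mul, CT_mul]
  have e1 : (-1 + 1 + 2 : ℤ) = 2 := by norm_num
  have e2 : (-1 + 1 + 1 : ℤ) = 1 := by norm_num
  rw [e1, e2]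
  have f1 : ((1:ℂ) * -(1/2)) * 1 = -(1/2) := by norm_num
  have f2 : ((1:ℂ) * -(1/2)) * 4 = -2 := by norm_num
  rw [CT_congr 2 f1, CT_congr 1 f2]

lemma phi_om2 : phi om2
    = AdjoinRoot.of fp (Cz (-(1/2)) * T 2 + Cz (-2) * T 1) := by
  show phi ((tq (-1) * U) • dd (tq 1)) = _
  rw [map_smul, phi_d, smul_eq_mul, Dlin_tq1]
  show (AdjoinRoot.of fp (T (-1)) * AdjoinRoot.root fp)
      * (AdjoinRoot.of fp (Cz (-(1/2)) * T 1) * AdjoinRoot.root fp) = _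
  rw [mul_shuffle, root_sq, ← map_mul, ← map_mul, qval]

lemma mu2_phi_om1 : mu2 (phi om1) = -(1/2) := by
  rw [phi_om1]
  show lap0 (c1 (AdjoinRoot.of fp (Cz (-(1/2)) * T 0) * AdjoinRoot.root fp)) = _
  rw [c1_of_root, lap0_single, if_pos rfl]

lemma mu1_phi_om1 : mu1 (phi om1) = 0 := by
  rw [phi_om1]
  show lam (c0 (AdjoinRoot.of fp (Cz (-(1/2)) * T 0) * AdjoinRoot.root fp)) = _
  rw [c0_of_root, map_zero]

lemma cc_one : cc 1 = 1 := by
  have := cc_succ 0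
  norm_num at this
  exact_mod_cast this

lemma cc_two : cc 2 = -2 := by
  have := cc_succ 1
  norm_num [Nat.centralBinom] at this
  exact_mod_cast this

lemma mu1_phi_om2 : mu1 (phi om2) = -1 := by
  rw [phi_om2]
  show lam (c0 (AdjoinRoot.of fp (Cz (-(1/2)) * T 2 + Cz (-2) * T 1))) = _
  rw [c0_of, map_add, lam_single, lam_single, cc_one, cc_two]
  norm_num

lemma mu2_phi_om2 : mu2 (phi om2) = 0 := by
  rw [phi_om2]
  show lap0 (c1 (AdjoinRoot.of fp (Cz (-(1/2)) * T 2 + Cz (-2) * T 1))) = _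
  rw [c1_of, map_zero]

lemma mu1_phi_dd (x : R) : mu1 (phi (dd x)) = 0 := by rw [phi_d]; exact mu1_Dlin x
lemma mu2_phi_dd (x : R) : mu2 (phi (dd x)) = 0 := by rw [phi_d]; exact mu2_Dlin x

/-! #### The main theorem pieces -/

lemma fam0 : threePtFam 0 = Submodule.Quotient.mk om1 := rfl
lemma fam1 : threePtFam 1 = Submodule.Quotient.mk om2 := rfl

lemma indep : LinearIndependent ℂ threePtFam := by
  rw [Fintype.linearIndependent_iff]
  intro g hg
  rw [Fin.sum_univ_two, fam0, fam1, ← Submodule.Quotient.mk_smul, ← Submodule.Quotient.mk_smul,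
    ← Submodule.Quotient.mk_add] at hg
  rw [Submodule.Quotient.mk_eq_zero] at hg
  obtain ⟨r, hr⟩ := hg
  have hr' : dd r = g 0 • om1 + g 1 • om2 := hr
  have h2 := congrArg (fun z => mu2 (phi z)) hr'
  have h1 := congrArg (fun z => mu1 (phi z)) hr'
  simp only [map_add, LinearMap.map_smul_of_tower, map_smul, smul_eq_mul] at h1 h2
  rw [mu2_phi_dd] at h2
  rw [mu1_phi_dd] at h1
  rw [mu2_phi_om1, mu2_phi_om2] at h2
  rw [mu1_phi_om1, mu1_phi_om2] at h1
  have hg0 : g 0 = 0 := by linear_combination (2:ℂ) * h2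
  have hg1 : g 1 = 0 := by linear_combination h1
  intro i
  fin_cases i
  · exact hg0
  · exact hg1

lemma range_fam : Set.range threePtFam
    = {Submodule.Quotient.mk om1, Submodule.Quotient.mk om2} := by
  ext x
  constructor
  · rintro ⟨i, rfl⟩
    fin_cases i
    · left; rfl
    · right; rfl
  · rintro (rfl | rfl)
    · exact ⟨0, rfl⟩
    · exact ⟨1, rfl⟩

lemma span_fam : Submodule.span ℂ (Set.range threePtFam) = ⊤ := by
  rw [range_fam, eq_top_iff]
  rintro q -
  obtain ⟨w, rfl⟩ := Submodule.Quotient.mk_surjective (dR 2 threePt) q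
  have hw : w ∈ NN := by rw [NN_top]; trivial
  rw [NN] at hw
  obtain ⟨y, hy, z, hz, rfl⟩ := Submodule.mem_sup.mp hw
  rw [Submodule.Quotient.mk_add]
  have hz0 : (Submodule.Quotient.mk z : OmQ 2 threePt) = 0 :=
    (Submodule.Quotient.mk_eq_zero _).mpr hz
  rw [hz0, add_zero]
  have himg : (dR 2 threePt).mkQ '' ({om1, om2} : Set Om)
      = {Submodule.Quotient.mk om1, Submodule.Quotient.mk om2} := by
    simp only [Set.image_insert_eq, Set.image_singleton, Submodule.mkQ_apply]
  rw [← himg, ← Submodule.map_span]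
  exact Submodule.mem_map_of_mem hy

end S17

theorem stmt17 :
    LinearIndependent ℂ threePtFam
      ∧ Submodule.span ℂ (Set.range threePtFam) = ⊤
      ∧ Module.finrank ℂ (OmQ 2 threePt) = 2 := by
  refine ⟨S17.indep, S17.span_fam, ?_⟩
  have b : Module.Basis (Fin 2) ℂ (OmQ 2 threePt) :=
    Module.Basis.mk S17.indep (S17.span_fam.ge)
  rw [Module.finrank_eq_card_basis b]
  simp
end
end

section
/- Let a ∈ ℂ \ {0,1} and b = (a+1)/(a-1). Then the 4-point ring R_a = ℂ[s, s⁻¹, (s-1)⁻¹, (s-a)⁻¹] is isomorphic as a ℂ-algebra to S_b = ℂ[t,t⁻¹,u] with u² = t² - 2bt + 1, and b ≠ ±1. -/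
noncomputable section

/-- The 4-point ring `ℂ[s, s⁻¹, (s-1)⁻¹, (s-a)⁻¹]`: the localization of `ℂ[s]`
at the multiplicative set generated by `s`, `s - 1`, `s - a`. -/
abbrev FourPt (a : ℂ) : Type :=
  Localization (Submonoid.closure
    {Polynomial.X, Polynomial.X - 1, Polynomial.X - Polynomial.C a} :
      Submonoid (Polynomial ℂ))

set_option linter.unusedSectionVars false
lemma cancelu {R : Type*} [CommRing R] {u v x y : R} (huv : u * v = 1) (h : u * x = u * y) :
    x = y := by
  calc x = v * (u * x) := by rw [← mul_assoc, mul_comm v u, huv, one_mul]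
  _ = v * (u * y) := by rw [h]
  _ = y := by rw [← mul_assoc, mul_comm v u, huv, one_mul]

lemma inv_uniq {R : Type*} [CommRing R] {u x y : R} (h1 : u * x = 1) (h2 : u * y = 1) :
    x = y := by
  calc x = (u * y) * x := by rw [h2, one_mul]
  _ = (u * x) * y := by ring
  _ = y := by rw [h1, one_mul]

section Idents

variable {R : Type} [CommRing R]

section identS
variable (A B Hh iA i1 ia1 T1 Tm Uu sg sgb : R)
  (R1 : T1 * Tm = 1) (R2 : Uu ^ 2 = T1 ^ 2 - 2 * B * T1 + 1) (R3 : (2:R) * Hh = 1)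
  (Rb : B * (A - 1) = A + 1) (Ra0 : iA * A = 1) (Ra1 : i1 * (A - 1) = 1)
  (Raa : ia1 * (A * (A - 1)) = 1)
  (hsg : sg = Hh * ((A + 1) - (A - 1) * (Uu + 1) * Tm))
  (hsgb : sgb = Hh * ((A + 1) - (A - 1) * (1 - Uu) * Tm))
include R1 R2 R3 Rb Ra0 Ra1 Raa hsg hsgb

lemma identE1 : sg * (sgb * iA) = 1 := by
  refine cancelu (u := (2:R)^2 * T1^1) (v := Hh^2 * Tm^1)
    (by rw [show (2:R)^2 * T1^1 * (Hh^2 * Tm^1) = ((2:R)*Hh)^2 * (T1*Tm)^1 by ring,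
      R1, R3]; norm_num) ?_
  linear_combination ((2) * Hh + (-2) * Hh*Uu + (2) * Hh*T1 + (2) * Hh*iA + (4) * Hh*iA*sgb + (-2) * Hh*iA*Uu + (4) * Hh*iA*Uu*sgb + (-2) * Hh*iA*T1 + (-4) * B*Hh + (4) * B*Hh*iA + (-2) * A*Hh + (2) * A*Hh*Uu + (-2) * A*Hh*T1 + (-2) * A*Hh*iA + (-4) * A*Hh*iA*sgb + (2) * A*Hh*iA*Uu + (-4) * A*Hh*iA*Uu*sgb + (2) * A*Hh*iA*T1 + (4) * A*B*Hh + (-4) * A*B*Hh*iA) * R1 + ((2) * Hh*Tm + (-2) * Hh*iA*Tm + (-2) * A*Hh*Tm + (2) * A*Hh*iA*Tm) * R2 + ((-2) * Uu + (2) * T1 + (2) * iA + (2) * iA*sgb + (2) * iA*Uu*sgb + (2) * iA*T1*sgb + (-2) * B + (2) * B*iA + (-2) * A + (-2) * A*iA*sgb + (2) * A*iA*Uu + (-2) * A*iA*Uu*sgb + (2) * A*iA*T1 + (2) * A*iA*T1*sgb + (2) * A*B + (-2) * A*B*iA) * R3 + ((2) + (-2) * iA) * Rb + ((-2) + (-2)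 * sgb + (2) * Uu + (-2) * Uu*sgb + (2) * T1 + (2) * T1*sgb) * Ra0 + ((4) * iA*T1*sgb) * hsg + ((-2) + (-2) * Uu + (2) * T1 + (2) * iA + (2) * iA*Uu + (2) * iA*T1) * hsgb

lemma identE2 : (sg - 1) * ((sgb - 1) * i1 * T1) = 1 := by
  refine cancelu (u := (2:R)^2 * T1^1) (v := Hh^2 * Tm^1)
    (by rw [show (2:R)^2 * T1^1 * (Hh^2 * Tm^1) = ((2:R)*Hh)^2 * (T1*Tm)^1 by ring,
      R1, R3]; norm_num) ?_
  linear_combination ((-2) * Hh + (2) * Hh*Uu^2 + (2) * Hh*T1 + (-2) * Hh*T1*Uu + (-4) * Hh*i1*T1 + (4) * Hh*i1*T1*sgb + (-4) * Hh*i1*T1*Uu + (4) * Hh*i1*T1*Uu*sgb + (2) * A*Hh + (-2) * A*Hh*Uu^2 + (-2) * A*Hh*T1 + (2) * A*Hh*T1*Uu + (4) * A*Hh*i1*T1 + (-4) * A*Hh*i1*T1*sgb + (4) * A*Hh*i1*T1*Uu + (-4) * A*Hh*i1*T1*Uu*sgb) * R1 + ((2) * Hh + (-2) * A*Hh) * R2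 + ((-2) * T1*Uu + (2) * T1^2 + (-2) * i1*T1 + (2) * i1*T1*sgb + (-2) * i1*T1*Uu + (2) * i1*T1*Uu*sgb + (-2) * i1*T1^2 + (2) * i1*T1^2*sgb + (-2) * B*T1 + (-2) * A*T1 + (2) * A*i1*T1 + (-2) * A*i1*T1*sgb + (2) * A*i1*T1*Uu + (-2) * A*i1*T1*Uu*sgb + (-2) * A*i1*T1^2 + (2) * A*i1*T1^2*sgb + (2) * A*B*T1) * R3 + ((2) * T1) * Rb + ((2) * T1 + (-2) * T1*sgb + (2) * T1*Uu + (-2) * T1*Uu*sgb + (-2) * T1^2 + (2) * T1^2*sgb) * Ra1 + ((-4) * i1*T1^2 + (4) * i1*T1^2*sgb) * hsg + ((-2) * T1 + (-2) * T1*Uu + (2) * T1^2) * hsgb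

lemma identE3 : (sg - A) * ((sgb - A) * ia1 * T1) = 1 := by
  refine cancelu (u := (2:R)^2 * T1^1) (v := Hh^2 * Tm^1)
    (by rw [show (2:R)^2 * T1^1 * (Hh^2 * Tm^1) = ((2:R)*Hh)^2 * (T1*Tm)^1 by ring,
      R1, R3]; norm_num) ?_
  linear_combination ((2) * Hh*ia1 + (-2) * Hh*ia1*Uu^2 + (2) * Hh*ia1*T1 + (4) * Hh*ia1*T1*sgb + (-2) * Hh*ia1*T1*Uu + (4) * Hh*ia1*T1*Uu*sgb + (-4) * A*Hh*ia1 + (4) * A*Hh*ia1*Uu^2 + (-8) * A*Hh*ia1*T1 + (-4) * A*Hh*ia1*T1*sgb + (-4) * A*Hh*ia1*T1*Uu*sgb + (2) * A^2*Hh*ia1 + (-2) * A^2*Hh*ia1*Uu^2 + (6) * A^2*Hh*ia1*T1 + (2) * A^2*Hh*ia1*T1*Uu) * R1 + ((-2) * Hh*ia1 + (4) * A*Hh*ia1 + (-2) * A^2*Hh*ia1) * R2 + ((2) * ia1*T1 + (2) * ia1*T1*sgb + (2) * ia1*T1*Uu*sgb + (2) * ia1*T1^2*sgb + (2) * B*ia1*T1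 + (-4) * A*ia1*T1 + (-2) * A*ia1*T1*sgb + (-2) * A*ia1*T1*Uu*sgb + (2) * A*ia1*T1^2*sgb + (-4) * A*B*ia1*T1 + (2) * A^2*ia1*T1 + (-4) * A^2*ia1*T1^2 + (2) * A^2*B*ia1*T1) * R3 + ((-2) * ia1*T1 + (2) * A*ia1*T1) * Rb + ((4) * T1) * Raa + ((4) * ia1*T1^2*sgb + (-4) * A*ia1*T1^2) * hsg + ((2) * ia1*T1 + (2) * ia1*T1*Uu + (2) * ia1*T1^2 + (-2) * A*ia1*T1 + (-2) * A*ia1*T1*Uu + (-2) * A*ia1*T1^2) * hsgb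

lemma identE4 : (1 - A) * sg * ((sgb - 1) * i1 * T1) * ((sgb - A) * ia1 * T1) = T1 := by
  refine cancelu (u := (2:R)^2 * T1^2) (v := Hh^2 * Tm^2)
    (by rw [show (2:R)^2 * T1^2 * (Hh^2 * Tm^2) = ((2:R)*Hh)^2 * (T1*Tm)^2 by ring,
      R1, R3]; norm_num) ?_
  linear_combination ((-2) * Hh*T1^2 + (2) * Hh*T1^2*Uu^2 + (2) * Hh*T1^3 + (-2) * Hh*T1^3*Uu + (2) * Hh*ia1*T1^2 + (-2) * Hh*ia1*T1^2*sgb + (-2) * Hh*ia1*T1^2*Uu^2 + (2) * Hh*ia1*T1^2*Uu^2*sgb + (2) * Hh*ia1*T1^3 + (2) * Hh*ia1*T1^3*sgb + (-4) * Hh*ia1*T1^3*sgb^2 + (-2) * Hh*ia1*T1^3*Uu + (6) * Hh*ia1*T1^3*Uu*sgb + (-4) * Hh*ia1*T1^3*Uu*sgb^2 + (2) * A*Hh*T1^2 + (-2) * A*Hh*T1^2*Uu^2 + (-2) * A*Hh*T1^3 + (2) * A*Hh*T1^3*Uu + (-4) * A*Hh*ia1*T1^2 + (4) * A*Hh*ia1*T1^2*sgb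 + (4) * A*Hh*ia1*T1^2*Uu^2 + (-4) * A*Hh*ia1*T1^2*Uu^2*sgb + (-4) * A*Hh*ia1*T1^3 + (4) * A*Hh*ia1*T1^3*sgb^2 + (-4) * A*Hh*ia1*T1^3*Uu + (4) * A*Hh*ia1*T1^3*Uu*sgb^2 + (2) * A^2*Hh*ia1*T1^2 + (-2) * A^2*Hh*ia1*T1^2*sgb + (-2) * A^2*Hh*ia1*T1^2*Uu^2 + (2) * A^2*Hh*ia1*T1^2*Uu^2*sgb + (2) * A^2*Hh*ia1*T1^3 + (-2) * A^2*Hh*ia1*T1^3*sgb + (6) * A^2*Hh*ia1*T1^3*Uu + (-6) * A^2*Hh*ia1*T1^3*Uu*sgb) * R1 + ((2) * Hh*T1^2 + (-2) * Hh*ia1*T1^2 + (2) * Hh*ia1*T1^2*sgb + (-2) * A*Hh*T1^2 + (4) * A*Hh*ia1*T1^2 + (-4) * A*Hh*ia1*T1^2*sgb + (-2) * A^2*Hh*ia1*T1^2 + (2) * A^2*Hh*ia1*T1^2*sgb) * R2 + ((-2) * T1^3*Uu + (2) * T1^4 + (2) * ia1*T1^3 + (-2) * ia1*T1^3*sgb^2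 + (2) * ia1*T1^3*Uu*sgb + (-2) * ia1*T1^3*Uu*sgb^2 + (2) * ia1*T1^4*sgb + (-2) * ia1*T1^4*sgb^2 + (-2) * B*T1^3 + (2) * B*ia1*T1^3 + (-2) * B*ia1*T1^3*sgb + (-2) * A*T1^3 + (-2) * A*ia1*T1^3 + (2) * A*ia1*T1^3*sgb^2 + (-2) * A*ia1*T1^3*Uu + (2) * A*ia1*T1^3*Uu*sgb^2 + (2) * A*ia1*T1^4 + (-2) * A*ia1*T1^4*sgb^2 + (2) * A*B*T1^3 + (-4) * A*B*ia1*T1^3 + (4) * A*B*ia1*T1^3*sgb + (2) * A^2*ia1*T1^3*Uu + (-2) * A^2*ia1*T1^3*Uu*sgb + (-2) * A^2*ia1*T1^4 + (2) * A^2*ia1*T1^4*sgb + (2) * A^2*B*ia1*T1^3 + (-2) * A^2*B*ia1*T1^3*sgb) * R3 + ((2) * T1^3 + (-2) * ia1*T1^3 + (2) * ia1*T1^3*sgb + (2) * A*ia1*T1^3 + (-2) * A*ia1*T1^3*sgb) * Rb + ((4) * ia1*T1^4*sg*sgb + (-4) * ia1*T1^4*sg*sgb^2 + (-4) * A*ia1*T1^4*sg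 + (4) * A*ia1*T1^4*sg*sgb) * Ra1 + ((2) * T1^3 + (-2) * T1^3*sgb + (2) * T1^3*Uu + (-2) * T1^3*Uu*sgb + (-2) * T1^4 + (2) * T1^4*sgb) * Raa + ((4) * ia1*T1^4*sgb + (-4) * ia1*T1^4*sgb^2 + (-4) * A*ia1*T1^4 + (4) * A*ia1*T1^4*sgb) * hsg + ((-2) * T1^3 + (-2) * T1^3*Uu + (2) * T1^4 + (2) * ia1*T1^3 + (-2) * ia1*T1^3*sgb + (2) * ia1*T1^3*Uu + (-2) * ia1*T1^3*Uu*sgb + (2) * ia1*T1^4 + (-2) * ia1*T1^4*sgb + (-2) * A*ia1*T1^3 + (2) * A*ia1*T1^3*sgb + (-2) * A*ia1*T1^3*Uu + (2) * A*ia1*T1^3*Uu*sgb + (2) * A*ia1*T1^4 + (-2) * A*ia1*T1^4*sgb) * hsgb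

lemma identE5 : (sg * sg - A) * ((sgb - 1) * i1 * T1) * ((sgb - A) * ia1 * T1) = Uu := by
  refine cancelu (u := (2:R)^2 * T1^2) (v := Hh^2 * Tm^2)
    (by rw [show (2:R)^2 * T1^2 * (Hh^2 * Tm^2) = ((2:R)*Hh)^2 * (T1*Tm)^2 by ring,
      R1, R3]; norm_num) ?_
  linear_combination ((-2) * Hh*T1 + (2) * Hh*T1*Uu^2 + (4) * Hh*T1^2 + (-2) * Hh*T1^2*Uu + (-2) * Hh*T1^2*Uu^2 + (-2) * Hh*T1^3 + (2) * Hh*T1^3*Uu + (2) * Hh*ia1*T1 + (-2) * Hh*ia1*T1*sgb + (-2) * Hh*ia1*T1*Uu^2 + (2) * Hh*ia1*T1*Uu^2*sgb + (4) * Hh*ia1*T1^2 + (-2) * Hh*ia1*T1^2*sgb + (-2) * Hh*ia1*T1^2*sgb^2 + (-2) * Hh*ia1*T1^2*Uu + (6) * Hh*ia1*T1^2*Uu*sgb + (-4) * Hh*ia1*T1^2*Uu*sgb^2 + (-2) * Hh*ia1*T1^2*Uu^2 + (4) * Hh*ia1*T1^2*Uu^2*sgb + (-2) * Hh*ia1*T1^2*Uu^2*sgb^2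 + (6) * Hh*ia1*T1^3 + (-8) * Hh*ia1*T1^3*sgb + (2) * Hh*ia1*T1^3*sgb^2 + (4) * Hh*ia1*T1^3*sg + (-4) * Hh*ia1*T1^3*sg*sgb + (2) * Hh*ia1*T1^3*Uu + (-4) * Hh*ia1*T1^3*Uu*sgb + (2) * Hh*ia1*T1^3*Uu*sgb^2 + (4) * Hh*ia1*T1^3*Uu*sg + (-4) * Hh*ia1*T1^3*Uu*sg*sgb + (4) * Hh*i1*ia1*T1^3 + (-8) * Hh*i1*ia1*T1^3*sgb + (4) * Hh*i1*ia1*T1^3*sgb^2 + (4) * Hh*i1*ia1*T1^3*sg + (-8) * Hh*i1*ia1*T1^3*sg*sgb + (4) * Hh*i1*ia1*T1^3*sg*sgb^2 + (4) * Hh*i1*ia1*T1^3*Uu + (-8) * Hh*i1*ia1*T1^3*Uu*sgb + (4) * Hh*i1*ia1*T1^3*Uu*sgb^2 + (4) * Hh*i1*ia1*T1^3*Uu*sg + (-8) * Hh*i1*ia1*T1^3*Uu*sg*sgb + (4) * Hh*i1*ia1*T1^3*Uu*sg*sgb^2 + (2) * A*Hh*T1 + (-2) * A*Hh*T1*Uu^2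 + (-4) * A*Hh*T1^2 + (2) * A*Hh*T1^2*Uu + (2) * A*Hh*T1^2*Uu^2 + (2) * A*Hh*T1^3 + (-2) * A*Hh*T1^3*Uu + (-4) * A*Hh*ia1*T1 + (4) * A*Hh*ia1*T1*sgb + (4) * A*Hh*ia1*T1*Uu^2 + (-4) * A*Hh*ia1*T1*Uu^2*sgb + (6) * A*Hh*ia1*T1^2 + (2) * A*Hh*ia1*T1^2*sgb^2 + (-12) * A*Hh*ia1*T1^2*Uu + (4) * A*Hh*ia1*T1^2*Uu*sgb^2 + (-2) * A*Hh*ia1*T1^2*Uu^2 + (2) * A*Hh*ia1*T1^2*Uu^2*sgb^2 + (-6) * A*Hh*ia1*T1^3 + (8) * A*Hh*ia1*T1^3*sgb + (-2) * A*Hh*ia1*T1^3*sgb^2 + (-4) * A*Hh*ia1*T1^3*sg + (4) * A*Hh*ia1*T1^3*sg*sgb + (2) * A*Hh*ia1*T1^3*Uu + (-2) * A*Hh*ia1*T1^3*Uu*sgb^2 + (-4) * A*Hh*ia1*T1^3*Uu*sg + (4) * A*Hh*ia1*T1^3*Uu*sg*sgb + (-4) * A*Hh*i1*ia1*T1^3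 + (8) * A*Hh*i1*ia1*T1^3*sgb + (-4) * A*Hh*i1*ia1*T1^3*sgb^2 + (-4) * A*Hh*i1*ia1*T1^3*sg + (8) * A*Hh*i1*ia1*T1^3*sg*sgb + (-4) * A*Hh*i1*ia1*T1^3*sg*sgb^2 + (-4) * A*Hh*i1*ia1*T1^3*Uu + (8) * A*Hh*i1*ia1*T1^3*Uu*sgb + (-4) * A*Hh*i1*ia1*T1^3*Uu*sgb^2 + (-4) * A*Hh*i1*ia1*T1^3*Uu*sg + (8) * A*Hh*i1*ia1*T1^3*Uu*sg*sgb + (-4) * A*Hh*i1*ia1*T1^3*Uu*sg*sgb^2 + (2) * A^2*Hh*ia1*T1 + (-2) * A^2*Hh*ia1*T1*sgb + (-2) * A^2*Hh*ia1*T1*Uu^2 + (2) * A^2*Hh*ia1*T1*Uu^2*sgb + (-10) * A^2*Hh*ia1*T1^2 + (2) * A^2*Hh*ia1*T1^2*sgb + (14) * A^2*Hh*ia1*T1^2*Uu + (-6) * A^2*Hh*ia1*T1^2*Uu*sgb + (4) * A^2*Hh*ia1*T1^2*Uu^2 + (-4) * A^2*Hh*ia1*T1^2*Uu^2*sgb +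 (-4) * A^2*Hh*ia1*T1^3*Uu + (4) * A^2*Hh*ia1*T1^3*Uu*sgb) * R1 + ((2) * Hh*T1 + (-2) * Hh*T1^2 + (-2) * Hh*ia1*T1 + (2) * Hh*ia1*T1*sgb + (-2) * Hh*ia1*T1^2 + (4) * Hh*ia1*T1^2*sgb + (-2) * Hh*ia1*T1^2*sgb^2 + (-2) * A*Hh*T1 + (2) * A*Hh*T1^2 + (4) * A*Hh*ia1*T1 + (-4) * A*Hh*ia1*T1*sgb + (-2) * A*Hh*ia1*T1^2 + (2) * A*Hh*ia1*T1^2*sgb^2 + (-2) * A^2*Hh*ia1*T1 + (2) * A^2*Hh*ia1*T1*sgb + (4) * A^2*Hh*ia1*T1^2 + (-4) * A^2*Hh*ia1*T1^2*sgb) * R2 + ((-2) * T1^2*Uu + (2) * T1^3 + (2) * T1^3*Uu + (-2) * T1^4 + (2) * ia1*T1^2 + (-2) * ia1*T1^2*sgb^2 + (2) * ia1*T1^2*Uu*sgb + (-2) * ia1*T1^2*Uu*sgb^2 + (4) * ia1*T1^3 + (-4) * ia1*T1^3*sgb + (2) * ia1*T1^3*sg + (-2) * ia1*T1^3*sg*sgb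 + (2) * ia1*T1^3*Uu + (-2) * ia1*T1^3*Uu*sgb + (2) * ia1*T1^3*Uu*sg + (-2) * ia1*T1^3*Uu*sg*sgb + (2) * ia1*T1^4 + (-2) * ia1*T1^4*sgb + (2) * ia1*T1^4*sg + (-2) * ia1*T1^4*sg*sgb + (2) * i1*ia1*T1^3 + (-4) * i1*ia1*T1^3*sgb + (2) * i1*ia1*T1^3*sgb^2 + (2) * i1*ia1*T1^3*sg + (-4) * i1*ia1*T1^3*sg*sgb + (2) * i1*ia1*T1^3*sg*sgb^2 + (2) * i1*ia1*T1^3*Uu + (-4) * i1*ia1*T1^3*Uu*sgb + (2) * i1*ia1*T1^3*Uu*sgb^2 + (2) * i1*ia1*T1^3*Uu*sg + (-4) * i1*ia1*T1^3*Uu*sg*sgb + (2) * i1*ia1*T1^3*Uu*sg*sgb^2 + (2) * i1*ia1*T1^4 + (-4) * i1*ia1*T1^4*sgb + (2) * i1*ia1*T1^4*sgb^2 + (2) * i1*ia1*T1^4*sg + (-4) * i1*ia1*T1^4*sg*sgb + (2) * i1*ia1*T1^4*sg*sgb^2 + (-2) * B*T1^2 + (2) * B*T1^3 + (2) * B*ia1*T1^2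 + (-2) * B*ia1*T1^2*sgb + (2) * B*ia1*T1^3 + (-4) * B*ia1*T1^3*sgb + (2) * B*ia1*T1^3*sgb^2 + (-2) * A*T1^2 + (2) * A*T1^3 + (2) * A*ia1*T1^2 + (2) * A*ia1*T1^2*sgb^2 + (-6) * A*ia1*T1^2*Uu + (2) * A*ia1*T1^2*Uu*sgb^2 + (6) * A*ia1*T1^3 + (-2) * A*ia1*T1^3*sgb^2 + (-2) * A*ia1*T1^3*sg + (2) * A*ia1*T1^3*sg*sgb + (2) * A*ia1*T1^3*Uu + (-2) * A*ia1*T1^3*Uu*sgb^2 + (-2) * A*ia1*T1^3*Uu*sg + (2) * A*ia1*T1^3*Uu*sg*sgb + (2) * A*ia1*T1^4 + (-4) * A*ia1*T1^4*sgb + (2) * A*ia1*T1^4*sgb^2 + (2) * A*ia1*T1^4*sg + (-2) * A*ia1*T1^4*sg*sgb + (-2) * A*i1*ia1*T1^3 + (4) * A*i1*ia1*T1^3*sgb + (-2) * A*i1*ia1*T1^3*sgb^2 + (-2) * A*i1*ia1*T1^3*sg + (4) * A*i1*ia1*T1^3*sg*sgb + (-2) * A*i1*ia1*T1^3*sg*sgb^2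 + (-2) * A*i1*ia1*T1^3*Uu + (4) * A*i1*ia1*T1^3*Uu*sgb + (-2) * A*i1*ia1*T1^3*Uu*sgb^2 + (-2) * A*i1*ia1*T1^3*Uu*sg + (4) * A*i1*ia1*T1^3*Uu*sg*sgb + (-2) * A*i1*ia1*T1^3*Uu*sg*sgb^2 + (2) * A*i1*ia1*T1^4 + (-4) * A*i1*ia1*T1^4*sgb + (2) * A*i1*ia1*T1^4*sgb^2 + (2) * A*i1*ia1*T1^4*sg + (-4) * A*i1*ia1*T1^4*sg*sgb + (2) * A*i1*ia1*T1^4*sg*sgb^2 + (2) * A*B*T1^2 + (-2) * A*B*T1^3 + (-4) * A*B*ia1*T1^2 + (4) * A*B*ia1*T1^2*sgb + (2) * A*B*ia1*T1^3 + (-2) * A*B*ia1*T1^3*sgb^2 + (-4) * A^2*ia1*T1^2 + (6) * A^2*ia1*T1^2*Uu + (-2) * A^2*ia1*T1^2*Uu*sgb + (4) * A^2*ia1*T1^3 + (-2) * A^2*ia1*T1^3*Uu + (2) * A^2*ia1*T1^3*Uu*sgb + (2) * A^2*ia1*T1^4 + (-2) * A^2*ia1*T1^4*sgb + (2) * A^2*B*ia1*T1^2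 + (-2) * A^2*B*ia1*T1^2*sgb + (-4) * A^2*B*ia1*T1^3 + (4) * A^2*B*ia1*T1^3*sgb) * R3 + ((2) * T1^2 + (-2) * T1^3 + (-2) * ia1*T1^2 + (2) * ia1*T1^2*sgb + (-2) * ia1*T1^3 + (4) * ia1*T1^3*sgb + (-2) * ia1*T1^3*sgb^2 + (2) * A*ia1*T1^2 + (-2) * A*ia1*T1^2*sgb + (-4) * A*ia1*T1^3 + (4) * A*ia1*T1^3*sgb) * Rb + ((-2) * ia1*T1^3 + (4) * ia1*T1^3*sgb + (-2) * ia1*T1^3*sgb^2 + (-2) * ia1*T1^3*sg + (4) * ia1*T1^3*sg*sgb + (-2) * ia1*T1^3*sg*sgb^2 + (-2) * ia1*T1^3*Uu + (4) * ia1*T1^3*Uu*sgb + (-2) * ia1*T1^3*Uu*sgb^2 + (-2) * ia1*T1^3*Uu*sg + (4) * ia1*T1^3*Uu*sg*sgb + (-2) * ia1*T1^3*Uu*sg*sgb^2 + (-2) * ia1*T1^4 + (4) * ia1*T1^4*sgb + (-2) * ia1*T1^4*sgb^2 + (2) * ia1*T1^4*sg + (-4) * ia1*T1^4*sg*sgb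 + (2) * ia1*T1^4*sg*sgb^2 + (4) * ia1*T1^4*sg^2 + (-4) * ia1*T1^4*sg^2*sgb + (-4) * A*ia1*T1^4 + (4) * A*ia1*T1^4*sgb) * Ra1 + ((-2) * T1^2 + (-2) * T1^2*sgb + (6) * T1^2*Uu + (-2) * T1^2*Uu*sgb + (4) * T1^3*sgb + (-2) * T1^3*Uu + (2) * T1^3*Uu*sgb + (2) * T1^4 + (-2) * T1^4*sgb) * Raa + ((2) * ia1*T1^3*sgb + (-2) * ia1*T1^3*sgb^2 + (2) * ia1*T1^3*Uu*sgb + (-2) * ia1*T1^3*Uu*sgb^2 + (4) * ia1*T1^4 + (-6) * ia1*T1^4*sgb + (2) * ia1*T1^4*sgb^2 + (4) * ia1*T1^4*sg + (-4) * ia1*T1^4*sg*sgb + (4) * i1*ia1*T1^4 + (-8) * i1*ia1*T1^4*sgb + (4) * i1*ia1*T1^4*sgb^2 + (4) * i1*ia1*T1^4*sg + (-8) * i1*ia1*T1^4*sg*sgb + (4) * i1*ia1*T1^4*sg*sgb^2 + (-2) * A*ia1*T1^3 + (2) * A*ia1*T1^3*sgb + (-2) * A*ia1*T1^3*Uu +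 (2) * A*ia1*T1^3*Uu*sgb + (2) * A*ia1*T1^4 + (-2) * A*ia1*T1^4*sgb) * hsg + ((-2) * T1^2 + (-2) * T1^2*Uu + (4) * T1^3 + (2) * T1^3*Uu + (-2) * T1^4 + (2) * ia1*T1^2 + (-2) * ia1*T1^2*sgb + (2) * ia1*T1^2*Uu + (-2) * ia1*T1^2*Uu*sgb + (4) * ia1*T1^3 + (-4) * ia1*T1^3*sgb + (2) * ia1*T1^3*Uu + (-2) * ia1*T1^3*Uu*sgb + (2) * ia1*T1^4 + (-2) * ia1*T1^4*sgb + (-2) * A*ia1*T1^2 + (2) * A*ia1*T1^2*sgb + (-2) * A*ia1*T1^2*Uu + (2) * A*ia1*T1^2*Uu*sgb + (12) * A*ia1*T1^3 + (-4) * A*ia1*T1^3*sgb + (2) * A*ia1*T1^3*Uu + (-2) * A*ia1*T1^3*Uu*sgb + (-2) * A*ia1*T1^4 + (2) * A*ia1*T1^4*sgb) * hsgb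

end identS

section identP
variable (Ap Bp Hp iap xp w0 w1 wa : R)
  (Rw1 : (xp - 1) * w1 = 1) (Rwa : (xp - Ap) * wa = 1) (Rw0 : xp * w0 = 1)
  (R3p : (2:R) * Hp = 1) (Rbp : Bp * (Ap - 1) = Ap + 1) (Riap : iap * (1 - Ap) = 1)
include Rw1 Rwa Rw0 R3p Rbp Riap

lemma identP1 : ((xp * xp - Ap) * w1 * wa) ^ 2 = ((1 - Ap) * xp * w1 * wa) ^ 2 - 2 * Bp * ((1 - Ap) * xp * w1 * wa) + 1 := by
  refine cancelu (u := ((xp - 1) * (xp - Ap))^2) (v := (w1 * wa)^2)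
    (by rw [show ((xp - 1) * (xp - Ap))^2 * (w1 * wa)^2 = ((xp-1)*w1)^2*((xp-Ap)*wa)^2 by ring,
      Rw1, Rwa]; norm_num) ?_
  linear_combination ((-1) * xp^4*wa^2 + xp^4*w1*wa^2 + (-1) * xp^5*w1*wa^2 + xp^6*wa^2 + (-1) * xp^6*w1*wa^2 + xp^7*w1*wa^2 + (-2) * Bp*xp^3*wa + (2) * Bp*xp^4*wa + (2) * Ap*xp^3*wa^2 + (-2) * Ap*xp^3*w1*wa^2 + (2) * Ap*xp^4*w1*wa^2 + (-2) * Ap*xp^5*wa^2 + (2) * Ap*xp^5*w1*wa^2 + (-2) * Ap*xp^6*w1*wa^2 + (4) * Ap*Bp*xp^2*wa + (-2) * Ap*Bp*xp^3*wa + (-2) * Ap*Bp*xp^4*wa + (-2) * Ap^2*Bp*xp*wa + (-2) * Ap^2*Bp*xp^2*wa + (4) * Ap^2*Bp*xp^3*wa + (-2) * Ap^3*xp*wa^2 + (2) * Ap^3*xp*w1*wa^2 + (-2) * Ap^3*xp^2*w1*wa^2 + (2) * Ap^3*xp^3*wa^2 + (-2) * Ap^3*xp^3*w1*wa^2 + (2)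 * Ap^3*xp^4*w1*wa^2 + (2) * Ap^3*Bp*xp*wa + (-2) * Ap^3*Bp*xp^2*wa + Ap^4*wa^2 + (-1) * Ap^4*w1*wa^2 + Ap^4*xp*w1*wa^2 + (-1) * Ap^4*xp^2*wa^2 + Ap^4*xp^2*w1*wa^2 + (-1) * Ap^4*xp^3*w1*wa^2) * Rw1 + ((-1) * xp^2 + (-1) * xp^3*wa + xp^4 + xp^5*wa + (-2) * Bp*xp^2 + (2) * Bp*xp^3 + Ap*xp^2*wa + (-1) * Ap*xp^4*wa + (2) * Ap*Bp*xp + (-2) * Ap*Bp*xp^3 + Ap^2 + Ap^2*xp*wa + (-1) * Ap^2*xp^2 + (-1) * Ap^2*xp^3*wa + (-2) * Ap^2*Bp*xp + (2) * Ap^2*Bp*xp^2 + (-1) * Ap^3*wa + Ap^3*xp^2*wa) * Rwa + ((2) * xp^2 + (-2) * xp^3 + (-2) * Ap*xp + (2) * Ap*xp^2) * Rbp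

lemma identP2 : ((1 - Ap) * xp * w1 * wa) * (iap * w0 * (xp - 1) * (xp - Ap)) = 1 := by
  linear_combination (iap*xp^2*w0*wa + (-1) * Ap*iap*xp*w0*wa + (-1) * Ap*iap*xp^2*w0*wa + Ap^2*iap*xp*w0*wa) * Rw1 + (iap*xp*w0 + (-1) * Ap*iap*xp*w0) * Rwa + (iap + (-1) * Ap*iap) * Rw0 + ((1)) * Riap

lemma identP3 : Hp * ((Ap + 1) - (Ap - 1) * ((xp * xp - Ap) * w1 * wa + 1) * (iap * w0 * (xp - 1) * (xp - Ap))) = xp := by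
  refine cancelu (u := (2:R)) (v := Hp) R3p ?_
  linear_combination ((2) * Hp*iap*xp^3*w0*wa + (-2) * Ap*Hp*iap*xp*w0*wa + (-2) * Ap*Hp*iap*xp^2*w0*wa + (-2) * Ap*Hp*iap*xp^3*w0*wa + (2) * Ap^2*Hp*iap*w0*wa + (2) * Ap^2*Hp*iap*xp*w0*wa + (2) * Ap^2*Hp*iap*xp^2*w0*wa + (-2) * Ap^3*Hp*iap*w0*wa) * Rw1 + ((2) * Hp*iap*xp^2*w0 + (-2) * Ap*Hp*iap*w0 + (-2) * Ap*Hp*iap*xp^2*w0 + (2) * Ap^2*Hp*iap*w0) * Rwa + ((-2) * Hp*iap + (4) * Hp*iap*xp + (-4) * Ap*Hp*iap*xp + (2) * Ap^2*Hp*iap) * Rw0 + ((1) + (-1) * iap + (2) * iap*xp + Ap + (-2) * Ap*iap*xp + Ap^2*iap) * R3p + ((-1) + (2) * xp + (-1) * Ap) * Riap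

end identP

end Idents

open Polynomial LaurentPolynomial

set_option maxHeartbeats 1000000 in
theorem stmt18 (a : ℂ) (ha0 : a ≠ 0) (ha1 : a ≠ 1) (b : ℂ) (hb : b = (a + 1) / (a - 1)) :
    Nonempty (FourPt a ≃ₐ[ℂ]
        SER 2 (Polynomial.X ^ 2 - Polynomial.C (2 * b) * Polynomial.X + 1))
      ∧ b ≠ 1 ∧ b ≠ -1 := by
  have ha1' : a - 1 ≠ 0 := sub_ne_zero.mpr ha1
  refine ⟨?_, ?_, ?_⟩
  case refine_2 =>
    rw [hb]; intro h; rw [div_eq_iff ha1'] at h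
    exact (by norm_num : (2:ℂ) ≠ 0) (by linear_combination h)
  case refine_3 =>
    rw [hb]; intro h; rw [div_eq_iff ha1'] at h
    exact ha0 (by linear_combination h / 2)
  -- MAIN
  set k : Polynomial ℂ := Polynomial.X ^ 2 - Polynomial.C (2 * b) * Polynomial.X + 1 with hk
  set M : Submonoid (Polynomial ℂ) :=
    Submonoid.closure {Polynomial.X, Polynomial.X - 1, Polynomial.X - Polynomial.C a} with hM
  -- ===== S-side atoms and relations =====
  set cS := algebraMap ℂ (SER 2 k) with hcS
  set T1 : SER 2 k := AdjoinRoot.of _ (T 1) with hT1d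
  set Tm : SER 2 k := AdjoinRoot.of _ (T (-1)) with hTmd
  set Uu : SER 2 k := AdjoinRoot.root _ with hUd
  set A := cS a with hA
  set B := cS b with hB
  set Hh := cS 2⁻¹ with hH
  set iA := cS a⁻¹ with hiA
  set i1 := cS (a-1)⁻¹ with hi1
  set ia1 := cS (a*(a-1))⁻¹ with hia1
  set sg := Hh * ((A+1) - (A-1)*(Uu+1)*Tm) with hsg
  set sgb := Hh * ((A+1) - (A-1)*(1-Uu)*Tm) with hsgb
  have R1 : T1 * Tm = 1 := by
    rw [hT1d, hTmd, ← map_mul, ← T_add]; norm_num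
  have R2 : Uu ^ 2 = T1 ^ 2 - 2 * B * T1 + 1 := by
    have h : (AdjoinRoot.mk ((Polynomial.X : Polynomial LA) ^ 2 - Polynomial.C k.toLaurent))
        ((Polynomial.X : Polynomial LA) ^ 2 - Polynomial.C k.toLaurent) = 0 :=
      AdjoinRoot.mk_self
    rw [map_sub, map_pow, AdjoinRoot.mk_X, AdjoinRoot.mk_C, sub_eq_zero] at h
    have h2b : cS (2*b) = 2 * B := by rw [hcS, map_mul, map_ofNat, hB]
    have hkt : k.toLaurent = T 1 * T 1 - LaurentPolynomial.C (2*b) * T 1 + 1 := by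
      rw [hk]
      simp only [map_add, map_sub, map_mul, Polynomial.toLaurent_X, Polynomial.toLaurent_C,
        map_one, map_pow, sq]
    have h' : (AdjoinRoot.of ((Polynomial.X : Polynomial LA) ^ 2 - Polynomial.C k.toLaurent))
        k.toLaurent = T1 ^ 2 - 2 * B * T1 + 1 := by
      rw [congrArg (AdjoinRoot.of ((Polynomial.X : Polynomial LA) ^ 2 - Polynomial.C k.toLaurent)) hkt]
      simp only [map_add, map_sub, map_mul, map_one]
      rw [show (AdjoinRoot.of ((Polynomial.X : Polynomial LA)^2 - Polynomial.C k.toLaurent))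
          (LaurentPolynomial.C 2) = cS 2 from rfl,
        show (AdjoinRoot.of ((Polynomial.X : Polynomial LA)^2 - Polynomial.C k.toLaurent))
          (LaurentPolynomial.C b) = B from rfl,
        show (AdjoinRoot.of ((Polynomial.X : Polynomial LA)^2 - Polynomial.C k.toLaurent))
          (T 1) = T1 from rfl, map_ofNat]
      ring
    rw [hUd, h, h']
  have R3 : (2 : SER 2 k) * Hh = 1 := by
    rw [hH, show ((2:SER 2 k)) = cS 2 by rw [hcS]; exact (map_ofNat _ 2).symm, ← map_mul]
    norm_num
  have Rb : B * (A - 1) = A + 1 := by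
    rw [hB, hA, show (1 : SER 2 k) = cS 1 by rw [map_one], ← map_sub, ← map_mul, ← map_add]
    congr 1
    rw [hb, div_mul_cancel₀ _ ha1']
  have Ra0 : iA * A = 1 := by rw [hiA, hA, ← map_mul, inv_mul_cancel₀ ha0, map_one]
  have Ra1 : i1 * (A - 1) = 1 := by
    rw [hi1, hA, show (1 : SER 2 k) = cS 1 by rw [map_one], ← map_sub, ← map_mul,
      inv_mul_cancel₀ ha1', map_one]
  have Raa : ia1 * (A * (A - 1)) = 1 := by
    rw [hia1, hA, show (1 : SER 2 k) = cS 1 by rw [map_one], ← map_sub, ← map_mul, ← map_mul,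
      inv_mul_cancel₀ (mul_ne_zero ha0 ha1'), map_one]
  have E1 := identE1 A B Hh iA i1 ia1 T1 Tm Uu sg sgb R1 R2 R3 Rb Ra0 Ra1 Raa hsg hsgb
  have E2 := identE2 A B Hh iA i1 ia1 T1 Tm Uu sg sgb R1 R2 R3 Rb Ra0 Ra1 Raa hsg hsgb
  have E3 := identE3 A B Hh iA i1 ia1 T1 Tm Uu sg sgb R1 R2 R3 Rb Ra0 Ra1 Raa hsg hsgb
  have E4 := identE4 A B Hh iA i1 ia1 T1 Tm Uu sg sgb R1 R2 R3 Rb Ra0 Ra1 Raa hsg hsgb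
  have E5 := identE5 A B Hh iA i1 ia1 T1 Tm Uu sg sgb R1 R2 R3 Rb Ra0 Ra1 Raa hsg hsgb
  -- ===== forward map F =====
  set ψ : Polynomial ℂ →ₐ[ℂ] SER 2 k := Polynomial.aeval sg with hψ
  have hψX : ψ Polynomial.X = sg := Polynomial.aeval_X sg
  have hψX1 : ψ (Polynomial.X - 1) = sg - 1 := by rw [map_sub, hψX, map_one]
  have hψXa : ψ (Polynomial.X - Polynomial.C a) = sg - A := by
    rw [map_sub, hψX, Polynomial.aeval_C]
  have hunits : ∀ y : M, IsUnit (ψ y) := by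
    rintro ⟨y, hy⟩
    refine Submonoid.closure_induction (motive := fun z _ => IsUnit (ψ z)) (fun z hz => ?_)
      (by simpa using isUnit_one) (fun z w _ _ hz hw => by show IsUnit (ψ (z*w)); rw [map_mul]; exact hz.mul hw) hy
    rcases hz with rfl | rfl | rfl
    · exact IsUnit.of_mul_eq_one _ (hψX ▸ E1)
    · exact IsUnit.of_mul_eq_one ((sgb - 1) * i1 * T1) (by rw [hψX1]; exact E2)
    · exact IsUnit.of_mul_eq_one ((sgb - A) * ia1 * T1) (by rw [hψXa]; exact E3)
  set F : FourPt a →ₐ[ℂ] SER 2 k := IsLocalization.liftAlgHom (M := M) hunits with hF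
  have hFalg : ∀ p : Polynomial ℂ, F (algebraMap (Polynomial ℂ) (FourPt a) p) = ψ p := by
    intro p
    rw [hF, IsLocalization.liftAlgHom_apply, IsLocalization.lift_eq]
    rfl
  -- ===== FourPt-side atoms and relations =====
  set ι := algebraMap (Polynomial ℂ) (FourPt a) with hι
  set cP := algebraMap ℂ (FourPt a) with hcP
  have m0 : (Polynomial.X : Polynomial ℂ) ∈ M := Submonoid.subset_closure (by left; rfl)
  have m1 : (Polynomial.X - 1 : Polynomial ℂ) ∈ M :=
    Submonoid.subset_closure (by right; left; rfl)
  have ma : (Polynomial.X - Polynomial.C a : Polynomial ℂ) ∈ M :=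
    Submonoid.subset_closure (by right; right; rfl)
  have hx0 : IsUnit (ι Polynomial.X) := IsLocalization.map_units (FourPt a) ⟨_, m0⟩
  have hx1 : IsUnit (ι (Polynomial.X - 1)) := IsLocalization.map_units (FourPt a) ⟨_, m1⟩
  have hxa : IsUnit (ι (Polynomial.X - Polynomial.C a)) :=
    IsLocalization.map_units (FourPt a) ⟨_, ma⟩
  set xp := ι Polynomial.X with hxp
  set w0 : FourPt a := ↑hx0.unit⁻¹ with hw0
  set w1 : FourPt a := ↑hx1.unit⁻¹ with hw1
  set wa : FourPt a := ↑hxa.unit⁻¹ with hwa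
  set Ap := cP a with hAp
  set Bp := cP b with hBp
  set Hp := cP 2⁻¹ with hHp
  set iap := cP (1-a)⁻¹ with hiap
  have Rw0 : xp * w0 = 1 := hx0.mul_val_inv
  have Rw1 : (xp - 1) * w1 = 1 := by
    rw [show xp - 1 = ι (Polynomial.X - 1) by rw [map_sub, map_one, hxp]]
    exact hx1.mul_val_inv
  have hCa : ι (Polynomial.C a) = Ap := by
    rw [hAp, hcP, hι, IsScalarTower.algebraMap_apply ℂ (Polynomial ℂ) (FourPt a),
      Polynomial.algebraMap_eq]
  have Rwa : (xp - Ap) * wa = 1 := by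
    rw [show xp - Ap = ι (Polynomial.X - Polynomial.C a) by rw [map_sub, hxp, hCa]]
    exact hxa.mul_val_inv
  have R3p : (2 : FourPt a) * Hp = 1 := by
    rw [hHp, show ((2 : FourPt a)) = cP 2 by rw [hcP]; exact (map_ofNat _ 2).symm, ← map_mul]
    norm_num
  have Rbp : Bp * (Ap - 1) = Ap + 1 := by
    rw [hBp, hAp, show (1 : FourPt a) = cP 1 by rw [map_one], ← map_sub, ← map_mul, ← map_add]
    congr 1
    rw [hb, div_mul_cancel₀ _ ha1']
  have Riap : iap * (1 - Ap) = 1 := by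
    rw [hiap, hAp, show (1 : FourPt a) = cP 1 by rw [map_one], ← map_sub, ← map_mul,
      inv_mul_cancel₀ (by intro h; apply ha1; linear_combination -h), map_one]
  set tR := (1 - Ap) * xp * w1 * wa with htR
  set uR := (xp * xp - Ap) * w1 * wa with huR
  have P1 := identP1 Ap Bp Hp iap xp w0 w1 wa Rw1 Rwa Rw0 R3p Rbp Riap
  have P2 := identP2 Ap Bp Hp iap xp w0 w1 wa Rw1 Rwa Rw0 R3p Rbp Riap
  have P3 := identP3 Ap Bp Hp iap xp w0 w1 wa Rw1 Rwa Rw0 R3p Rbp Riap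
  -- ===== backward map G =====
  set gb : Polynomial ℂ →ₐ[ℂ] FourPt a := Polynomial.aeval tR with hgb
  have hgbX : gb Polynomial.X = tR := Polynomial.aeval_X tR
  have hgbunits : ∀ y : Submonoid.powers (Polynomial.X : Polynomial ℂ), IsUnit (gb y) := by
    rintro ⟨_, n, rfl⟩
    rw [map_pow, hgbX]
    exact (IsUnit.of_mul_eq_one _ P2).pow n
  haveI hLoc : IsLocalization (Submonoid.powers (Polynomial.X : Polynomial ℂ)) LA :=
    LaurentPolynomial.isLocalization
  haveI hTow : IsScalarTower ℂ (Polynomial ℂ) LA :=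
    IsScalarTower.of_algebraMap_eq fun c => by
      simp [LaurentPolynomial.algebraMap_eq_toLaurent]
  set Gll := (IsLocalization.liftAlgHom (M := Submonoid.powers (Polynomial.X : Polynomial ℂ))
      (S := LA) hgbunits : LA →ₐ[ℂ] FourPt a) with hGlld
  have hGll : ∀ p : Polynomial ℂ, Gll (Polynomial.toLaurent p) = gb p := by
    intro p
    rw [hGlld, IsLocalization.liftAlgHom_apply,
      show Polynomial.toLaurent p = algebraMap (Polynomial ℂ) LA p from rfl,
      IsLocalization.lift_eq]
    rfl
  have hGllT1 : Gll (T 1) = tR := by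
    rw [← Polynomial.toLaurent_X, hGll, hgbX]
  have h2bp : cP (2*b) = 2 * Bp := by rw [hcP, map_mul, map_ofNat, hBp]
  have uRok : ((Polynomial.X : Polynomial LA) ^ 2 - Polynomial.C k.toLaurent).eval₂
      Gll.toRingHom uR = 0 := by
    rw [Polynomial.eval₂_sub, Polynomial.eval₂_pow, Polynomial.eval₂_X, Polynomial.eval₂_C]
    have hGllk : Gll k.toLaurent = uR ^ 2 := by
      rw [show k.toLaurent = Polynomial.toLaurent k from rfl, hGll, hk]
      simp only [map_add, map_sub, map_mul, map_pow, map_one, Polynomial.aeval_X,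
        Polynomial.aeval_C]
      rw [hgbX, show gb (Polynomial.C 2) = (2:FourPt a) by
          rw [hgb, Polynomial.aeval_C]; exact map_ofNat _ 2,
        show gb (Polynomial.C b) = Bp from by rw [hgb, Polynomial.aeval_C]]
      have P1' : uR ^ 2 = tR ^ 2 - 2 * Bp * tR + 1 := P1
      linear_combination -P1'
    rw [show Gll.toRingHom k.toLaurent = Gll k.toLaurent from rfl, hGllk]
    ring
  set G0 : SER 2 k →+* FourPt a := AdjoinRoot.lift Gll.toRingHom uR uRok with hG0
  have hG0of : ∀ g : LA, G0 (AdjoinRoot.of _ g) = Gll g := fun g => AdjoinRoot.lift_of uRok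
  have hG0alg : ∀ z : ℂ, G0 (algebraMap ℂ (SER 2 k) z) = algebraMap ℂ (FourPt a) z := by
    intro z
    rw [IsScalarTower.algebraMap_apply ℂ LA (SER 2 k), AdjoinRoot.algebraMap_eq, hG0of]
    exact Gll.commutes z
  set G : SER 2 k →ₐ[ℂ] FourPt a := { toRingHom := G0, commutes' := hG0alg } with hG
  have hGapp : ∀ s : SER 2 k, G s = G0 s := fun s => rfl
  have hCz : ∀ z : ℂ, ι (Polynomial.C z) = cP z := by
    intro z
    rw [hcP, hι, IsScalarTower.algebraMap_apply ℂ (Polynomial ℂ) (FourPt a),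
      Polynomial.algebraMap_eq]
  -- key value computations
  have hFxp : F xp = sg := (hFalg Polynomial.X).trans hψX
  have hFAp : F Ap = A := F.commutes a
  have hFw1v : F w1 = (sgb - 1) * i1 * T1 := by
    have h1 : (sg - 1) * F w1 = 1 := by
      have h := congrArg F Rw1
      rw [map_mul, map_sub, map_one, hFxp] at h
      exact h
    exact inv_uniq h1 E2
  have hFwav : F wa = (sgb - A) * ia1 * T1 := by
    have h1 : (sg - A) * F wa = 1 := by
      have h := congrArg F Rwa
      rw [map_mul, map_sub, hFxp, hFAp, map_one] at h
      exact h
    exact inv_uniq h1 E3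
  have hFtR : F tR = T1 := by
    rw [htR, map_mul, map_mul, map_mul, map_sub, map_one, hFxp, hFAp, hFw1v, hFwav]
    exact E4
  have hFuR : F uR = Uu := by
    rw [huR, map_mul, map_mul, map_sub, map_mul, hFxp, hFAp, hFw1v, hFwav]
    exact E5
  have hGT1 : G T1 = tR := by rw [hGapp, hT1d, hG0of, hGllT1]
  have hGTm : G Tm = iap * w0 * (xp - 1) * (xp - Ap) := by
    have h1 : tR * G Tm = 1 := by
      rw [hGapp, hTmd, hG0of, ← hGllT1, ← map_mul, ← T_add]
      norm_num
    exact inv_uniq h1 P2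
  have hGU : G Uu = uR := by rw [hGapp, hUd]; exact AdjoinRoot.lift_root uRok
  have hGH : G Hh = Hp := G.commutes (2⁻¹ : ℂ)
  have hGA : G A = Ap := G.commutes a
  -- G ∘ F = id
  have hGF : G.comp F = AlgHom.id ℂ (FourPt a) := by
    apply AlgHom.coe_ringHom_injective
    apply IsLocalization.ringHom_ext M
    apply Polynomial.ringHom_ext'
    · ext z
      show G (F (ι (Polynomial.C z))) = ι (Polynomial.C z)
      rw [hCz, hcP, F.commutes, G.commutes]
    · show G (F xp) = xp
      rw [hFxp, hsg]
      simp only [map_mul, map_sub, map_add, map_one, hGTm, hGU, hGH, hGA]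
      exact P3
  -- F ∘ G = id
  have hFof : ∀ g : LA, F (G (AdjoinRoot.of _ g)) = AdjoinRoot.of _ g := by
    have key : (F.comp G).comp (IsScalarTower.toAlgHom ℂ LA (SER 2 k)) =
        IsScalarTower.toAlgHom ℂ LA (SER 2 k) := by
      apply AddMonoidAlgebra.algHom_ext'
      apply MonoidHom.ext_mint
      show F (G (algebraMap LA (SER 2 k) (T 1))) = algebraMap LA (SER 2 k) (T 1)
      rw [AdjoinRoot.algebraMap_eq]
      show F (G T1) = T1
      rw [hGT1, hFtR]
      exact Subsingleton.elim _ _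
    intro g
    have h2 := DFunLike.congr_fun key g
    simpa only [AlgHom.coe_comp, Function.comp_apply, IsScalarTower.coe_toAlgHom',
      AdjoinRoot.algebraMap_eq] using h2
  have hFG : F.comp G = AlgHom.id ℂ (SER 2 k) := by
    refine AlgHom.ext fun p => ?_
    show F (G p) = p
    obtain ⟨q, rfl⟩ := AdjoinRoot.mk_surjective p
    induction q using Polynomial.induction_on' with
    | add p q hp hq => simp only [map_add, hp, hq]
    | monomial n z =>
      rw [← Polynomial.C_mul_X_pow_eq_monomial, map_mul, map_pow, AdjoinRoot.mk_X,
        show AdjoinRoot.mk ((Polynomial.X : Polynomial LA) ^ 2 - Polynomial.C k.toLaurent)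
          (Polynomial.C z) = AdjoinRoot.of _ z from rfl,
        map_mul, map_mul, map_pow, map_pow, ← hUd, hGU, hFuR, hFof z]
  exact ⟨AlgEquiv.ofAlgHom F G hFG hGF⟩
end
end
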